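/- arXiv:2511.17050 — 7 statements merged into one kernel-verified Lean document; each statement's English description precedes it below -/
import Mathlib

section
/- Let μ > 0, let 0 < a < μ/2 and let 0 ≤ x ≤ μ − 2a. Then (G_μ(x+a) − G_μ(x+2a)) / (G_μ(x) − G_μ(x+a)) < 1 − (a/μ)·g''(x/μ)/|g'(x/μ)|, and in particular (G_μ(x+a) − G_μ(x+2a)) / (G_μ(x) − G_μ(x+a)) < 1 − 2a/(πμ). (Both denominators are positive since G_μ is strictly decreasing on [0, μ].) -/
open Real

/-- The function `g(x) = (1/π)(√(1−x²) − x·arccos x)`. -/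
noncomputable def g (x : ℝ) : ℝ := (1 / Real.pi) * (Real.sqrt (1 - x ^ 2) - x * Real.arccos x)

/-- For `μ > 0`, `G_μ(x) = μ·g(x/μ)`. -/
noncomputable def G (μ x : ℝ) : ℝ := μ * g (x / μ)

lemma g_hasDerivAt {t : ℝ} (h1 : -1 < t) (h2 : t < 1) :
    HasDerivAt g (-(Real.arccos t) / Real.pi) t := by
  have hs : (0:ℝ) < 1 - t ^ 2 := by nlinarith
  have hsq : (0:ℝ) < Real.sqrt (1 - t ^ 2) := Real.sqrt_pos.2 hs
  have hsqrt : HasDerivAt (fun u : ℝ => Real.sqrt (1 - u ^ 2))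
      (1 / (2 * Real.sqrt (1 - t ^ 2)) * (0 - 2 * t)) t := by
    have h0 : HasDerivAt (fun u : ℝ => 1 - u ^ 2) (0 - 2 * t) t := by
      exact ((hasDerivAt_const t (1:ℝ)).sub (hasDerivAt_pow 2 t)).congr_deriv (by simp)
    exact (Real.hasDerivAt_sqrt hs.ne').comp t h0
  have harccos : HasDerivAt Real.arccos (-(1 / Real.sqrt (1 - t ^ 2))) t :=
    Real.hasDerivAt_arccos h1.ne' h2.ne
  have hmul : HasDerivAt (fun u : ℝ => u * Real.arccos u)
      (1 * Real.arccos t + t * -(1 / Real.sqrt (1 - t ^ 2))) t :=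
    (hasDerivAt_id t).mul harccos
  have h := ((hsqrt.sub hmul).const_mul (1 / Real.pi))
  refine h.congr_deriv ?_
  have hπ : Real.pi ≠ 0 := Real.pi_ne_zero
  field_simp
  ring

set_option maxHeartbeats 1000000 in
lemma key (y b : ℝ) (hy0 : 0 ≤ y) (hb : 0 < b) (hyb : y + 2 * b ≤ 1) :
    0 < g y - g (y + b) ∧
    (g (y + b) - g (y + 2 * b)) / (g y - g (y + b)) <
      1 - b * (1 / (Real.arccos y * Real.sqrt (1 - y ^ 2))) := by
  have hy1 : y < 1 := by linarith
  have hcpos : 0 < Real.arccos y := Real.arccos_pos.2 hy1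
  have hs2 : (0:ℝ) < 1 - y ^ 2 := by nlinarith
  have hspos : 0 < Real.sqrt (1 - y ^ 2) := Real.sqrt_pos.2 hs2
  have hgc : Continuous g := by
    unfold g
    exact continuous_const.mul (((Real.continuous_sqrt.comp (by continuity)).sub
      (continuous_id.mul Real.continuous_arccos)))
  -- MVT 1 on [y, y+b]
  obtain ⟨ξ, hξ, hslξ⟩ := exists_hasDerivAt_eq_slope g (fun t => -(Real.arccos t) / Real.pi)
    (by linarith : y < y + b) hgc.continuousOn
    (fun t ht => g_hasDerivAt (by cases ht; linarith) (by cases ht; linarith))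
  have hξ1 : ξ ∈ Set.Ioo y (y + b) := hξ
  have hξlt1 : ξ < 1 := by cases hξ1; linarith
  have hξ0 : 0 < ξ := by cases hξ1; linarith
  have hD1 : g y - g (y + b) = b * (Real.arccos ξ / Real.pi) := by
    have hb' : y + b - y = b := by ring
    rw [hb'] at hslξ
    have heq := (div_eq_iff hb.ne').mp hslξ.symm
    linear_combination -heq
  have hD1pos : 0 < g y - g (y + b) := by
    rw [hD1]
    have := Real.arccos_pos.2 hξlt1
    positivity
  -- D1 ≤ b * arccos y / π
  have hD1le : g y - g (y + b) ≤ b * (Real.arccos y / Real.pi) := by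
    rw [hD1]
    have : Real.arccos ξ ≤ Real.arccos y := by
      refine (Real.strictAntiOn_arccos ⟨by linarith, hy1.le⟩ ⟨by linarith, hξlt1.le⟩ hξ1.1).le
    have hπ := Real.pi_pos
    gcongr
  -- MVT 2 on h(t) = g t - g (t+b)
  obtain ⟨η, hη, hslη⟩ := exists_hasDerivAt_eq_slope (fun t => g t - g (t + b))
    (fun t => -(Real.arccos t) / Real.pi - -(Real.arccos (t + b)) / Real.pi)
    (by linarith : y < y + b)
    ((hgc.sub (hgc.comp (continuous_id.add continuous_const))).continuousOn)
    (fun t ht => by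
      obtain ⟨ht1, ht2⟩ := ht
      have h1 := g_hasDerivAt (show -1 < t by linarith) (by linarith)
      have h2 : HasDerivAt (fun u : ℝ => g (u + b)) (-(Real.arccos (t + b)) / Real.pi) t := by
        have := (g_hasDerivAt (show -1 < t + b by linarith)
          (show t + b < 1 by linarith)).comp t ((hasDerivAt_id t).add_const b)
        exact this.congr_deriv (mul_one _)
      exact h1.sub h2)
  have hη1 : η ∈ Set.Ioo y (y + b) := hη
  -- MVT 3 on arccos on [η, η+b]
  obtain ⟨ζ, hζ, hslζ⟩ := exists_hasDerivAt_eq_slope Real.arccos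
    (fun t => -(1 / Real.sqrt (1 - t ^ 2))) (by linarith : η < η + b)
    Real.continuous_arccos.continuousOn
    (fun t ht => by
      obtain ⟨ht1, ht2⟩ := ht
      obtain ⟨hη1', hη2'⟩ := hη1
      exact Real.hasDerivAt_arccos (by nlinarith) (by nlinarith))
  have hζ1 : ζ ∈ Set.Ioo η (η + b) := hζ
  have hζy : y < ζ := by cases hζ1; cases hη1; linarith
  have hζlt1 : ζ < 1 := by cases hζ1; cases hη1; linarith
  have hζ0 : 0 < ζ := lt_of_le_of_lt hy0 hζy
  have hsζ2 : (0:ℝ) < 1 - ζ ^ 2 := by nlinarith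
  have hsζpos : 0 < Real.sqrt (1 - ζ ^ 2) := Real.sqrt_pos.2 hsζ2
  -- assemble D1 - D2
  have hb' : y + b - y = b := by ring
  have hb'' : η + b - η = b := by ring
  rw [hb'] at hslη
  rw [hb''] at hslζ
  have hD12 : (g y - g (y + b)) - (g (y + b) - g (y + 2 * b)) =
      b * b * (1 / (Real.pi * Real.sqrt (1 - ζ ^ 2))) := by
    have e1 : (g (y + b + b) : ℝ) = g (y + 2 * b) := by ring_nf
    have heq1 := (div_eq_iff hb.ne').mp hslη.symm
    have heq2 := (div_eq_iff hb.ne').mp hslζ.symm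
    rw [e1] at heq1
    have hπ : Real.pi ≠ 0 := Real.pi_ne_zero
    have hsζne : Real.sqrt (1 - ζ ^ 2) ≠ 0 := hsζpos.ne'
    field_simp at heq1 heq2
    rw [mul_one_div, eq_div_iff (by positivity : Real.pi * Real.sqrt (1 - ζ ^ 2) ≠ 0)]
    refine mul_left_cancel₀ hπ ?_
    rw [show y + b * 2 = y + 2 * b by ring] at heq1
    linear_combination (-(Real.pi * Real.sqrt (1 - ζ ^ 2))) * heq1 + (-(b * Real.pi)) * heq2
  -- lower bound on D1 - D2
  have hsζlt : Real.sqrt (1 - ζ ^ 2) < Real.sqrt (1 - y ^ 2) := by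
    apply Real.sqrt_lt_sqrt hsζ2.le
    nlinarith
  have hgap : b * b * (1 / (Real.pi * Real.sqrt (1 - y ^ 2))) <
      (g y - g (y + b)) - (g (y + b) - g (y + 2 * b)) := by
    rw [hD12]
    have hπ := Real.pi_pos
    gcongr
  refine ⟨hD1pos, ?_⟩
  rw [div_lt_iff₀ hD1pos]
  have hπ := Real.pi_pos
  have hkey : b * (1 / (Real.arccos y * Real.sqrt (1 - y ^ 2))) * (g y - g (y + b)) ≤
      b * b * (1 / (Real.pi * Real.sqrt (1 - y ^ 2))) := by
    have h1 : b * (1 / (Real.arccos y * Real.sqrt (1 - y ^ 2))) * (g y - g (y + b)) ≤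
        b * (1 / (Real.arccos y * Real.sqrt (1 - y ^ 2))) * (b * (Real.arccos y / Real.pi)) := by
      gcongr
    have h2 : b * (1 / (Real.arccos y * Real.sqrt (1 - y ^ 2))) *
        (b * (Real.arccos y / Real.pi)) = b * b * (1 / (Real.pi * Real.sqrt (1 - y ^ 2))) := by
      field_simp [hcpos.ne', hspos.ne', Real.pi_ne_zero]
    linarith
  nlinarith [hgap, hkey]

/-- Lemma 2.1: for `μ > 0`, `0 < a < μ/2`, `0 ≤ x ≤ μ − 2a`, the ratio
`(G_μ(x+a) − G_μ(x+2a))/(G_μ(x) − G_μ(x+a))` is less than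
`1 − (a/μ)·g''(x/μ)/|g'(x/μ)|` (where `g''(y)/|g'(y)| = 1/(arccos(y)·√(1−y²))`),
and in particular less than `1 − 2a/(πμ)`. -/
theorem stmt0 (μ a x : ℝ) (hμ : 0 < μ) (ha : 0 < a) (ha' : a < μ / 2)
    (hx0 : 0 ≤ x) (hx : x ≤ μ - 2 * a) :
    (G μ (x + a) - G μ (x + 2 * a)) / (G μ x - G μ (x + a)) <
      1 - (a / μ) * (1 / (Real.arccos (x / μ) * Real.sqrt (1 - (x / μ) ^ 2))) ∧
    (G μ (x + a) - G μ (x + 2 * a)) / (G μ x - G μ (x + a)) <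
      1 - 2 * a / (Real.pi * μ) := by
  set y := x / μ with hy
  set b := a / μ with hbdef
  have hμ' : μ ≠ 0 := hμ.ne'
  have hb : 0 < b := div_pos ha hμ
  have hy0 : 0 ≤ y := div_nonneg hx0 hμ.le
  have hyb : y + 2 * b ≤ 1 := by
    have e : y + 2 * b = (x + 2 * a) / μ := by
      rw [hy, hbdef]; field_simp
    rw [e]
    exact div_le_one_of_le₀ (by linarith) hμ.le
  obtain ⟨hD1pos, hkey⟩ := key y b hy0 hb hyb
  have e1 : (x + a) / μ = y + b := by rw [hy, hbdef]; field_simp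
  have e2 : (x + 2 * a) / μ = y + 2 * b := by rw [hy, hbdef]; field_simp
  have eG : (G μ (x + a) - G μ (x + 2 * a)) / (G μ x - G μ (x + a)) =
      (g (y + b) - g (y + 2 * b)) / (g y - g (y + b)) := by
    unfold G
    rw [e1, e2]
    rw [← mul_sub, ← mul_sub, mul_div_mul_left _ _ hμ']
  rw [eG]
  constructor
  · exact hkey
  · refine lt_of_lt_of_le hkey ?_
    have hy1 : y < 1 := by linarith
    have hcpos : 0 < Real.arccos y := Real.arccos_pos.2 hy1
    have hs2 : (0:ℝ) < 1 - y ^ 2 := by nlinarith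
    have hspos : 0 < Real.sqrt (1 - y ^ 2) := Real.sqrt_pos.2 hs2
    have hπ := Real.pi_pos
    have hcle : Real.arccos y ≤ Real.pi / 2 := Real.arccos_le_pi_div_two.2 hy0
    have hsle : Real.sqrt (1 - y ^ 2) ≤ 1 := Real.sqrt_le_one.2 (by nlinarith)
    have hprod : Real.arccos y * Real.sqrt (1 - y ^ 2) ≤ Real.pi / 2 := by
      nlinarith
    have h1 : 2 / Real.pi ≤ 1 / (Real.arccos y * Real.sqrt (1 - y ^ 2)) := by
      rw [div_le_div_iff₀ hπ (by positivity)]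
      nlinarith
    have e3 : 2 * a / (Real.pi * μ) = b * (2 / Real.pi) := by
      rw [hbdef]; field_simp
    rw [e3]
    have : b * (2 / Real.pi) ≤ b * (1 / (Real.arccos y * Real.sqrt (1 - y ^ 2))) := by
      gcongr
    linarith
end

section
/- Let μ ≥ 2 and let M₀ be a real number with 0 ≤ M₀ < μ and G_μ(M₀) ≤ 1/4. Then ∫_{M₀}^μ G_μ(t) dt ≤ ((8π − 3√2)/(16(4π − √2)))·(μ − M₀). (In the paper M₀ = ⌊G_μ^{−1}(1/4)⌋ + 1, which satisfies these hypotheses.) -/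
noncomputable def q (x : ℝ) : ℝ := (1 - x) * Real.sqrt (1 - x)

lemma q_cont : Continuous q := by
  unfold q
  exact (continuous_const.sub continuous_id).mul
    (Real.continuous_sqrt.comp (continuous_const.sub continuous_id))

lemma q_nonneg {x : ℝ} (h : x ≤ 1) : 0 ≤ q x := by
  unfold q
  have : (0:ℝ) ≤ 1 - x := by linarith
  positivity

lemma g_cont : Continuous g := by
  unfold g
  exact continuous_const.mul
    ((Real.continuous_sqrt.comp (continuous_const.sub (continuous_pow 2))).sub
      (continuous_id.mul Real.continuous_arccos))

lemma g_one : g 1 = 0 := by simp [g]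

lemma q_one : q 1 = 0 := by simp [q]

lemma g_hasDeriv {x : ℝ} (h1 : -1 < x) (h2 : x < 1) :
    HasDerivAt g (-Real.arccos x / Real.pi) x := by
  have hs : (0:ℝ) < 1 - x ^ 2 := by nlinarith
  have hπ : Real.pi ≠ 0 := Real.pi_ne_zero
  have hin : HasDerivAt (fun y : ℝ => 1 - y ^ 2) (-(2 * x)) x := by
    simpa using ((hasDerivAt_pow 2 x).const_sub 1)
  have hsqrt : HasDerivAt (fun y : ℝ => Real.sqrt (1 - y ^ 2))
      (-(2 * x) / (2 * Real.sqrt (1 - x ^ 2))) x := by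
    have := hin.sqrt hs.ne'
    simpa using this
  have harccos := Real.hasDerivAt_arccos (by linarith : x ≠ -1) h2.ne
  have hmul : HasDerivAt (fun y : ℝ => y * Real.arccos y)
      (1 * Real.arccos x + x * -(1 / Real.sqrt (1 - x ^ 2))) x :=
    (hasDerivAt_id x).mul harccos
  have hfull : HasDerivAt g
      ((1 / Real.pi) * ((-(2 * x) / (2 * Real.sqrt (1 - x ^ 2))) -
        (1 * Real.arccos x + x * -(1 / Real.sqrt (1 - x ^ 2))))) x :=
    (hsqrt.sub hmul).const_mul (1 / Real.pi)
  convert hfull using 1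
  have hrt : Real.sqrt (1 - x ^ 2) ≠ 0 := by positivity
  field_simp
  ring

lemma q_hasDeriv {x : ℝ} (hx : x < 1) :
    HasDerivAt q (-(3 / 2) * Real.sqrt (1 - x)) x := by
  have hs : (0:ℝ) < 1 - x := by linarith
  have hlin : HasDerivAt (fun y : ℝ => 1 - y) (-1) x := by
    simpa using ((hasDerivAt_id x).const_sub 1)
  have hsqrt : HasDerivAt (fun y : ℝ => Real.sqrt (1 - y))
      (-1 / (2 * Real.sqrt (1 - x))) x := hlin.sqrt hs.ne'
  have hfull : HasDerivAt q (-1 * Real.sqrt (1 - x) + (1 - x) * (-1 / (2 * Real.sqrt (1 - x)))) x :=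
    hlin.mul hsqrt
  convert hfull using 1
  have hrt : Real.sqrt (1 - x) ≠ 0 := by positivity
  have hms : Real.sqrt (1 - x) * Real.sqrt (1 - x) = 1 - x := Real.mul_self_sqrt hs.le
  rw [← hms]
  field_simp
  ring_nf
  rw [Real.sqrt_sq (Real.sqrt_nonneg _)]
  nlinarith [hms, sq_nonneg (Real.sqrt (1 - x))]

lemma arccos_le_aux {x : ℝ} (h0 : 0 ≤ x) (h1 : x ≤ 1) :
    Real.arccos x ≤ Real.pi / 2 - x := by
  rw [Real.arccos]
  have hx : x ≤ Real.arcsin x := by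
    rcases eq_or_lt_of_le (Real.arcsin_nonneg.mpr h0) with h | h
    · have hs := Real.sin_arcsin (by linarith : (-1:ℝ) ≤ x) h1
      rw [← h] at hs
      simp at hs
      linarith
    · have hlt := Real.sin_lt h
      rw [Real.sin_arcsin (by linarith : (-1:ℝ) ≤ x) h1] at hlt
      linarith
  linarith

lemma arccos_lower {x : ℝ} (h1 : -1 ≤ x) (h2 : x ≤ 1) :
    Real.sqrt 2 * Real.sqrt (1 - x) ≤ Real.arccos x := by
  set θ := Real.arccos x with hθdef
  have hθ0 : 0 ≤ θ := Real.arccos_nonneg x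
  have hcos : Real.cos θ = x := Real.cos_arccos h1 h2
  have hle : 1 - θ ^ 2 / 2 ≤ x := by
    rw [← hcos]; exact Real.one_sub_sq_div_two_le_cos
  have h2' : 2 * (1 - x) ≤ θ ^ 2 := by linarith
  calc Real.sqrt 2 * Real.sqrt (1 - x) = Real.sqrt (2 * (1 - x)) :=
        (Real.sqrt_mul (by norm_num) _).symm
    _ ≤ Real.sqrt (θ ^ 2) := Real.sqrt_le_sqrt h2'
    _ = θ := Real.sqrt_sq hθ0

lemma cos_upper {θ : ℝ} (h0 : 0 < θ) (h2 : θ ≤ 2) :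
    Real.cos θ ≤ 1 - θ ^ 2 / 2 + θ ^ 4 / 16 := by
  have hy0 : 0 < θ / 2 := by linarith
  have hy1 : θ / 2 ≤ 1 := by linarith
  have hsin : θ / 2 - (θ / 2) ^ 3 / 4 < Real.sin (θ / 2) := by
    have := Real.sin_gt_sub_cube hy0
    nlinarith [pow_pos hy0 3]
  have hid : Real.cos θ = 1 - 2 * Real.sin (θ / 2) ^ 2 := by
    have hpyth := Real.sin_sq_add_cos_sq (θ / 2)
    have hdm := Real.cos_two_mul (θ / 2)
    have h2θ : 2 * (θ / 2) = θ := by ring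
    rw [h2θ] at hdm
    linarith
  have hnn : 0 ≤ θ / 2 - (θ / 2) ^ 3 / 4 := by
    have hy2 : (θ / 2) ^ 2 ≤ 1 := by nlinarith
    nlinarith
  have hsq : (θ / 2 - (θ / 2) ^ 3 / 4) ^ 2 ≤ Real.sin (θ / 2) ^ 2 := by
    nlinarith [hsin, hnn]
  rw [hid]
  nlinarith [hsq, pow_pos h0 6]

lemma arccos_upper {x : ℝ} (h0 : (0.43:ℝ) ≤ x) (h1 : x ≤ 1) :
    Real.arccos x ≤ 1.55 * Real.sqrt (1 - x) := by
  rcases eq_or_lt_of_le h1 with rfl | hlt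
  · simp [Real.arccos_one]
  set θ := Real.arccos x with hθdef
  have hθ0 : 0 < θ := Real.arccos_pos.mpr hlt
  have hcos : Real.cos θ = x := Real.cos_arccos (by linarith) h1
  have hπ : Real.pi < 3.141593 := Real.pi_lt_d6
  have hθle : θ ≤ 1.1408 := by
    have := arccos_le_aux (by linarith : (0:ℝ) ≤ x) h1
    have hmono : Real.arccos x ≤ Real.pi / 2 - 0.43 := by linarith
    linarith
  have hcub := cos_upper hθ0 (by linarith)
  have hxle : x ≤ 1 - θ ^ 2 / 2 + θ ^ 4 / 16 := by rw [← hcos]; exact hcub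
  have hθsq : θ ^ 2 ≤ 1.30142464 := by nlinarith
  have hθ4 : θ ^ 4 ≤ 1.30142464 * θ ^ 2 := by nlinarith [sq_nonneg θ]
  have hkey : θ ^ 2 ≤ 2.4025 * (1 - x) := by nlinarith
  calc θ = Real.sqrt (θ ^ 2) := (Real.sqrt_sq hθ0.le).symm
    _ ≤ Real.sqrt (2.4025 * (1 - x)) := Real.sqrt_le_sqrt hkey
    _ = Real.sqrt 2.4025 * Real.sqrt (1 - x) := Real.sqrt_mul (by norm_num) _
    _ = 1.55 * Real.sqrt (1 - x) := by
        rw [show (2.4025:ℝ) = 1.55 ^ 2 by norm_num, Real.sqrt_sq (by norm_num)]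

lemma sqrt_two_lb : (1.414:ℝ) ≤ Real.sqrt 2 := by
  have h : Real.sqrt 2 * Real.sqrt 2 = 2 := Real.mul_self_sqrt (by norm_num)
  nlinarith [Real.sqrt_nonneg 2]

lemma sqrt_two_ub : Real.sqrt 2 ≤ (1.4143:ℝ) := by
  have h : Real.sqrt 2 * Real.sqrt 2 = 2 := Real.mul_self_sqrt (by norm_num)
  nlinarith [Real.sqrt_nonneg 2]

lemma g_lower {x : ℝ} (h0 : 0 ≤ x) (h1 : x ≤ 1) : 0.3 * q x ≤ g x := by
  set ψ : ℝ → ℝ := fun y => g y - 0.3 * q y with hψ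
  have hanti : AntitoneOn ψ (Set.Icc (0:ℝ) 1) := by
    apply antitoneOn_of_deriv_nonpos (convex_Icc 0 1)
      (Continuous.continuousOn (g_cont.sub (continuous_const.mul q_cont)))
    · intro y hy
      rw [interior_Icc] at hy
      obtain ⟨hy1, hy2⟩ := hy
      exact ((g_hasDeriv (by linarith) hy2).sub
        ((q_hasDeriv hy2).const_mul 0.3)).differentiableAt.differentiableWithinAt
    · intro y hy
      rw [interior_Icc] at hy
      obtain ⟨hy1, hy2⟩ := hy
      have hd := (g_hasDeriv (by linarith : (-1:ℝ) < y) hy2).sub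
        ((q_hasDeriv hy2).const_mul 0.3)
      erw [hd.deriv]
      have hlow := arccos_lower (by linarith : (-1:ℝ) ≤ y) hy2.le
      have hπ : Real.pi < 3.141593 := Real.pi_lt_d6
      have hπ0 : 0 < Real.pi := Real.pi_pos
      have hs2 := sqrt_two_lb
      have hsn : 0 ≤ Real.sqrt (1 - y) := Real.sqrt_nonneg _
      have hkey : 0.45 * Real.pi * Real.sqrt (1 - y) ≤ Real.arccos y := by
        calc 0.45 * Real.pi * Real.sqrt (1 - y) ≤ Real.sqrt 2 * Real.sqrt (1 - y) := by
              nlinarith [mul_nonneg (show (0:ℝ) ≤ Real.sqrt 2 - 0.45 * Real.pi by nlinarith) hsn]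
          _ ≤ Real.arccos y := hlow
      have harith : -Real.arccos y / Real.pi - 0.3 * (-(3 / 2) * Real.sqrt (1 - y))
          = (0.45 * Real.pi * Real.sqrt (1 - y) - Real.arccos y) / Real.pi := by
        field_simp
        ring
      rw [harith]
      exact div_nonpos_of_nonpos_of_nonneg (by linarith) hπ0.le
  have h1mem : (1:ℝ) ∈ Set.Icc (0:ℝ) 1 := by norm_num
  have := hanti ⟨h0, h1⟩ h1mem h1
  simp only [hψ, g_one, q_one] at this
  linarith

lemma g_upper {x : ℝ} (h0 : (0.43:ℝ) ≤ x) (h1 : x ≤ 1) : g x ≤ 0.33 * q x := by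
  set χ : ℝ → ℝ := fun y => 0.33 * q y - g y with hχ
  have hanti : AntitoneOn χ (Set.Icc (0.43:ℝ) 1) := by
    apply antitoneOn_of_deriv_nonpos (convex_Icc 0.43 1)
      (Continuous.continuousOn ((continuous_const.mul q_cont).sub g_cont))
    · intro y hy
      rw [interior_Icc] at hy
      obtain ⟨hy1, hy2⟩ := hy
      exact (((q_hasDeriv hy2).const_mul 0.33).sub
        (g_hasDeriv (by linarith) hy2)).differentiableAt.differentiableWithinAt
    · intro y hy
      rw [interior_Icc] at hy
      obtain ⟨hy1, hy2⟩ := hy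
      have hd := ((q_hasDeriv hy2).const_mul 0.33).sub
        (g_hasDeriv (by linarith : (-1:ℝ) < y) hy2)
      erw [hd.deriv]
      have hup := arccos_upper hy1.le hy2.le
      have hπ : 3.141592 < Real.pi := Real.pi_gt_d6
      have hπ0 : 0 < Real.pi := Real.pi_pos
      have hsn : 0 ≤ Real.sqrt (1 - y) := Real.sqrt_nonneg _
      have hkey : Real.arccos y ≤ 0.495 * Real.pi * Real.sqrt (1 - y) := by
        calc Real.arccos y ≤ 1.55 * Real.sqrt (1 - y) := hup
          _ ≤ 0.495 * Real.pi * Real.sqrt (1 - y) := by nlinarith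
      have harith : 0.33 * (-(3 / 2) * Real.sqrt (1 - y)) - -Real.arccos y / Real.pi
          = (Real.arccos y - 0.495 * Real.pi * Real.sqrt (1 - y)) / Real.pi := by
        field_simp
        ring
      rw [harith]
      apply div_nonpos_of_nonpos_of_nonneg _ hπ0.le
      linarith
  have h1mem : (1:ℝ) ∈ Set.Icc (0.43:ℝ) 1 := by norm_num
  have := hanti ⟨h0, h1⟩ h1mem h1
  simp only [hχ, g_one, q_one] at this
  linarith

lemma g_anti : AntitoneOn g (Set.Icc (0:ℝ) 1) := by
  apply antitoneOn_of_deriv_nonpos (convex_Icc 0 1) g_cont.continuousOn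
  · intro y hy
    rw [interior_Icc] at hy
    obtain ⟨hy1, hy2⟩ := hy
    exact (g_hasDeriv (by linarith) hy2).differentiableAt.differentiableWithinAt
  · intro y hy
    rw [interior_Icc] at hy
    obtain ⟨hy1, hy2⟩ := hy
    rw [(g_hasDeriv (by linarith : (-1:ℝ) < y) hy2).deriv]
    have := Real.arccos_nonneg y
    apply div_nonpos_of_nonpos_of_nonneg (by linarith) Real.pi_pos.le

lemma g_043 : (1:ℝ) / 8 < g 0.43 := by
  have hπ0 : 0 < Real.pi := Real.pi_pos
  have hπ : Real.pi < 3.141593 := Real.pi_lt_d6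
  have hsq : (0.9028:ℝ) ≤ Real.sqrt (1 - 0.43 ^ 2) := by
    rw [show (1:ℝ) - 0.43 ^ 2 = 0.8151 by norm_num,
      show (0.9028:ℝ) = Real.sqrt (0.9028 ^ 2) from (Real.sqrt_sq (by norm_num)).symm]
    exact Real.sqrt_le_sqrt (by norm_num)
  have harc : Real.arccos 0.43 ≤ Real.pi / 2 - 0.43 :=
    arccos_le_aux (by norm_num) (by norm_num)
  have hA : Real.pi / 8 < Real.sqrt (1 - 0.43 ^ 2) - 0.43 * Real.arccos 0.43 := by
    nlinarith
  unfold g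
  rw [show (1:ℝ) / 8 = (1 / Real.pi) * (Real.pi / 8) by field_simp]
  apply mul_lt_mul_of_pos_left hA (by positivity)

set_option maxHeartbeats 1000000 in
/-- Corollary 2.6: for `μ ≥ 2` and `0 ≤ M₀ < μ` with `G_μ(M₀) ≤ 1/4`,
`∫_{M₀}^μ G_μ(t) dt ≤ ((8π − 3√2)/(16(4π − √2)))·(μ − M₀)`. -/
theorem stmt4 (μ M₀ : ℝ) (hμ : 2 ≤ μ) (hM0 : 0 ≤ M₀) (hM : M₀ < μ)
    (hG : G μ M₀ ≤ 1 / 4) :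
    (∫ t in M₀..μ, G μ t) ≤
      (8 * Real.pi - 3 * Real.sqrt 2) / (16 * (4 * Real.pi - Real.sqrt 2)) * (μ - M₀) := by
  have hμ0 : (0:ℝ) < μ := by linarith
  have hμs : (0:ℝ) < Real.sqrt μ := Real.sqrt_pos.mpr hμ0
  have hx0mem : M₀ / μ ∈ Set.Icc (0:ℝ) 1 :=
    ⟨div_nonneg hM0 hμ0.le, by rw [div_le_one hμ0]; linarith⟩
  have hGval : μ * g (M₀ / μ) ≤ 1 / 4 := hG
  have hq0 : 0 ≤ q (M₀ / μ) := q_nonneg hx0mem.2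
  have hg0 : 0 ≤ g (M₀ / μ) := le_trans (by nlinarith) (g_lower hx0mem.1 hx0mem.2)
  have h8 : g (M₀ / μ) ≤ 1 / 8 := by nlinarith
  have hx43 : (0.43:ℝ) ≤ M₀ / μ := by
    by_contra hcon
    push_neg at hcon
    have h43mem : (0.43:ℝ) ∈ Set.Icc (0:ℝ) 1 := by norm_num
    have := g_anti hx0mem h43mem hcon.le
    linarith [g_043]
  -- pointwise bound
  have hpt : ∀ t ∈ Set.Icc M₀ μ, G μ t ≤
      0.33 / Real.sqrt μ * ((μ - t) * Real.sqrt (μ - t)) := by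
    intro t ht
    have ht1 : t / μ ≤ 1 := by rw [div_le_one hμ0]; exact ht.2
    have ht43 : (0.43:ℝ) ≤ t / μ :=
      le_trans hx43 (div_le_div_of_nonneg_right ht.1 hμ0.le)
    have hgu := g_upper ht43 ht1
    have h1t : (1:ℝ) - t / μ = (μ - t) / μ := by field_simp
    have hnn : (0:ℝ) ≤ μ - t := by linarith [ht.2]
    have hqv : q (t / μ) = (μ - t) / μ * (Real.sqrt (μ - t) / Real.sqrt μ) := by
      unfold q
      rw [h1t, Real.sqrt_div hnn]
    calc G μ t = μ * g (t / μ) := rfl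
      _ ≤ μ * (0.33 * q (t / μ)) := by nlinarith [hgu]
      _ = 0.33 / Real.sqrt μ * ((μ - t) * Real.sqrt (μ - t)) := by
          rw [hqv]
          have hms : Real.sqrt μ * Real.sqrt μ = μ := Real.mul_self_sqrt hμ0.le
          field_simp
  -- integrability
  have hGcont : Continuous (G μ) := by
    unfold G
    exact continuous_const.mul (g_cont.comp (continuous_id.div_const μ))
  have hBcont : Continuous (fun t : ℝ => 0.33 / Real.sqrt μ * ((μ - t) * Real.sqrt (μ - t))) := by
    exact continuous_const.mul ((continuous_const.sub continuous_id).mul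
      (Real.continuous_sqrt.comp (continuous_const.sub continuous_id)))
  have hGint : IntervalIntegrable (G μ) MeasureTheory.volume M₀ μ :=
    hGcont.intervalIntegrable _ _
  have hBint : IntervalIntegrable
      (fun t : ℝ => 0.33 / Real.sqrt μ * ((μ - t) * Real.sqrt (μ - t)))
      MeasureTheory.volume M₀ μ := hBcont.intervalIntegrable _ _
  have hmono := intervalIntegral.integral_mono_on hM.le hGint hBint hpt
  -- FTC for the bound
  have hIcont : Continuous (fun t : ℝ => (μ - t) * Real.sqrt (μ - t)) :=
    (continuous_const.sub continuous_id).mul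
      (Real.continuous_sqrt.comp (continuous_const.sub continuous_id))
  have hFTC : (∫ t in M₀..μ, (μ - t) * Real.sqrt (μ - t))
      = 2 / 5 * ((μ - M₀) ^ 2 * Real.sqrt (μ - M₀)) := by
    have hFcont : ContinuousOn (fun t : ℝ => -(2 / 5) * ((μ - t) ^ 2 * Real.sqrt (μ - t)))
        (Set.Icc M₀ μ) := by
      apply Continuous.continuousOn
      exact continuous_const.mul (((continuous_const.sub continuous_id).pow 2).mul
        (Real.continuous_sqrt.comp (continuous_const.sub continuous_id)))
    have hFderiv : ∀ x ∈ Set.Ioo M₀ μ,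
        HasDerivAt (fun t : ℝ => -(2 / 5) * ((μ - t) ^ 2 * Real.sqrt (μ - t)))
          ((μ - x) * Real.sqrt (μ - x)) x := by
      intro x hx
      have hs : (0:ℝ) < μ - x := by linarith [hx.2]
      have hlin : HasDerivAt (fun t : ℝ => μ - t) (-1) x := by
        simpa using ((hasDerivAt_id x).const_sub μ)
      have hsqrt : HasDerivAt (fun t : ℝ => Real.sqrt (μ - t))
          (-1 / (2 * Real.sqrt (μ - x))) x := hlin.sqrt hs.ne'
      have hsq : HasDerivAt (fun t : ℝ => (μ - t) ^ 2)
          ((2 : ℕ) * (μ - x) ^ 1 * (-1)) x := hlin.pow 2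
      have hfull : HasDerivAt (fun t : ℝ => -(2 / 5) * ((μ - t) ^ 2 * Real.sqrt (μ - t)))
          (-(2 / 5) * ((2 : ℕ) * (μ - x) ^ 1 * (-1) * Real.sqrt (μ - x) +
            (μ - x) ^ 2 * (-1 / (2 * Real.sqrt (μ - x))))) x :=
        (hsq.mul hsqrt).const_mul (-(2 / 5) : ℝ)
      convert hfull using 1
      have hrt : Real.sqrt (μ - x) ≠ 0 := by positivity
      have hms : Real.sqrt (μ - x) * Real.sqrt (μ - x) = μ - x := Real.mul_self_sqrt hs.le
      rw [← hms]
      field_simp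
      rw [Real.sqrt_sq (Real.sqrt_nonneg _)]
      ring
    have hint : IntervalIntegrable (fun t : ℝ => (μ - t) * Real.sqrt (μ - t))
        MeasureTheory.volume M₀ μ := hIcont.intervalIntegrable _ _
    rw [intervalIntegral.integral_eq_sub_of_hasDerivAt_of_le hM.le hFcont hFderiv hint]
    simp
  -- lower bound on (μ-M₀)^{3/2}/√μ
  have hnn0 : (0:ℝ) ≤ μ - M₀ := by linarith
  have hlow : 0.3 * ((μ - M₀) * Real.sqrt (μ - M₀) / Real.sqrt μ) ≤ 1 / 4 := by
    have hgl := g_lower hx0mem.1 hx0mem.2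
    have h1t : (1:ℝ) - M₀ / μ = (μ - M₀) / μ := by field_simp
    have hqv : q (M₀ / μ) = (μ - M₀) / μ * (Real.sqrt (μ - M₀) / Real.sqrt μ) := by
      unfold q
      rw [h1t, Real.sqrt_div hnn0]
    have hchain : μ * (0.3 * q (M₀ / μ)) ≤ μ * g (M₀ / μ) := by nlinarith [hgl]
    have heq : μ * (0.3 * q (M₀ / μ)) = 0.3 * ((μ - M₀) * Real.sqrt (μ - M₀) / Real.sqrt μ) := by
      rw [hqv]
      field_simp
    linarith [heq ▸ hchain]
  -- assemble
  have hS : (μ - M₀) * Real.sqrt (μ - M₀) / Real.sqrt μ ≤ 5 / 6 := by linarith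
  have hSnn : 0 ≤ (μ - M₀) * Real.sqrt (μ - M₀) / Real.sqrt μ := by positivity
  have hRHS : (∫ t in M₀..μ, 0.33 / Real.sqrt μ * ((μ - t) * Real.sqrt (μ - t)))
      ≤ 0.11 * (μ - M₀) := by
    rw [intervalIntegral.integral_const_mul, hFTC]
    have heq2 : 0.33 / Real.sqrt μ * (2 / 5 * ((μ - M₀) ^ 2 * Real.sqrt (μ - M₀)))
        = 0.132 * ((μ - M₀) * ((μ - M₀) * Real.sqrt (μ - M₀) / Real.sqrt μ)) := by
      field_simp
      ring
    rw [heq2]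
    nlinarith [hS, hSnn, hnn0]
  have hc : (0.11:ℝ) ≤ (8 * Real.pi - 3 * Real.sqrt 2) / (16 * (4 * Real.pi - Real.sqrt 2)) := by
    have hπ : 3.141592 < Real.pi := Real.pi_gt_d6
    have h1 := sqrt_two_lb
    have h2 := sqrt_two_ub
    rw [le_div_iff₀ (by nlinarith)]
    linarith
  calc (∫ t in M₀..μ, G μ t) ≤ 0.11 * (μ - M₀) := le_trans hmono hRHS
    _ ≤ (8 * Real.pi - 3 * Real.sqrt 2) / (16 * (4 * Real.pi - Real.sqrt 2)) * (μ - M₀) :=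
        mul_le_mul_of_nonneg_right hc hnn0
end

section
/- For every μ ≥ 12, the lattice point counting function satisfies 𝒫^N_2(μ) ≥ μ²/4 + 0.0014·μ. (Since the Neumann eigenvalue counting function of the unit disk satisfies 𝒩^N(μ) ≥ 𝒫^N_2(μ), this is an improvement of the Neumann Pólya conjecture for the unit disk.) -/
/-- The lattice point counting function
`𝒫^N_2(μ) = −⌊μ/π + 3/4⌋ + 2·Σ_{m=0}^{⌊μ⌋} ⌊G_μ(m) + 3/4⌋`. -/
noncomputable def latticePN2 (μ : ℝ) : ℝ :=
  -(⌊μ / Real.pi + 3 / 4⌋ : ℝ) + 2 * ∑ m ∈ Finset.range (⌊μ⌋₊ + 1), (⌊G μ (m : ℝ) + 3 / 4⌋ : ℝ)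


open Real Set


noncomputable def Pf (t : ℝ) : ℝ := Real.sin t - t * Real.cos t
noncomputable def Qf (t : ℝ) : ℝ := Real.sin (2*t)/8 - t * Real.cos (2*t)/4

lemma aux_mono {a b : ℝ} {f f' : ℝ → ℝ} (hd : ∀ y, HasDerivAt f (f' y) y)
    (h' : ∀ y, a ≤ y → y ≤ b → 0 ≤ f' y) (hab : a ≤ b) : f a ≤ f b := by
  have hdiff : Differentiable ℝ f := fun y => (hd y).differentiableAt
  have H := monotoneOn_of_deriv_nonneg (convex_Icc a b) hdiff.continuous.continuousOn
    (hdiff.differentiableOn)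
    (fun y hy => by
      rw [(hd y).deriv]
      rw [interior_Icc, Set.mem_Ioo] at hy
      exact h' y hy.1.le hy.2.le)
  exact H (Set.left_mem_Icc.2 hab) (Set.right_mem_Icc.2 hab) hab

lemma hasDerivAt_Pf (t : ℝ) : HasDerivAt Pf (t * Real.sin t) t := by
  have h := (Real.hasDerivAt_sin t).sub ((hasDerivAt_id t).mul (Real.hasDerivAt_cos t))
  exact h.congr_deriv (by simp only [id_eq]; ring)

lemma hasDerivAt_Qf (t : ℝ) : HasDerivAt Qf (t * Real.sin (2*t) / 2) t := by
  have h2t : HasDerivAt (fun x : ℝ => 2*x) 2 t := by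
    simpa using (hasDerivAt_id t).const_mul (2:ℝ)
  have hs : HasDerivAt (fun x : ℝ => Real.sin (2*x)) (Real.cos (2*t) * 2) t :=
    (Real.hasDerivAt_sin (2*t)).comp t h2t
  have hc : HasDerivAt (fun x : ℝ => Real.cos (2*x)) (-Real.sin (2*t) * 2) t :=
    (Real.hasDerivAt_cos (2*t)).comp t h2t
  have h := (hs.div_const 8).sub (((hasDerivAt_id t).mul hc).div_const 4)
  exact h.congr_deriv (by simp only [id_eq]; ring)

lemma sin_ge_taylor {x : ℝ} (hx : 0 ≤ x) : x - x^3/6 ≤ Real.sin x := by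
  have h := aux_mono (f := fun y => Real.sin y - (y - y^3/6))
    (f' := fun y => Real.cos y - (1 - y^2/2))
    (fun y => by
      have h1 := Real.hasDerivAt_sin y
      have h2 : HasDerivAt (fun y : ℝ => y - y^3/6) (1 - 3*y^2/6) y :=
        (hasDerivAt_id y).sub ((hasDerivAt_pow 3 y).div_const 6)
      exact (h1.sub h2).congr_deriv (by ring))
    (fun y _ _ => by nlinarith [Real.one_sub_sq_div_two_le_cos (x := y)]) hx
  have h2 : Real.sin 0 - (0 - 0^3/6) ≤ Real.sin x - (x - x^3/6) := h
  have h3 : Real.sin 0 = 0 := Real.sin_zero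
  nlinarith [h2, h3]

lemma cos_le_taylor {x : ℝ} (hx : 0 ≤ x) : Real.cos x ≤ 1 - x^2/2 + x^4/24 := by
  have h := aux_mono (f := fun y => (1 - y^2/2 + y^4/24) - Real.cos y)
    (f' := fun y => (-(2*y)/2 + 4*y^3/24) + Real.sin y)
    (fun y => by
      have h2 : HasDerivAt (fun y : ℝ => 1 - y^2/2 + y^4/24) (-(2*y)/2 + 4*y^3/24) y := by
        have := (((hasDerivAt_pow 2 y).div_const 2).const_sub 1).add ((hasDerivAt_pow 4 y).div_const 24)
        exact this.congr_deriv (by push_cast; ring)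
      exact (h2.sub (Real.hasDerivAt_cos y)).congr_deriv (by ring))
    (fun y hy _ => by nlinarith [sin_ge_taylor hy]) hx
  have h2 : (1 - 0^2/2 + 0^4/24) - Real.cos 0 ≤ (1 - x^2/2 + x^4/24) - Real.cos x := h
  linarith [h2, Real.cos_zero]

lemma sin_le_taylor {x : ℝ} (hx : 0 ≤ x) : Real.sin x ≤ x - x^3/6 + x^5/120 := by
  have h := aux_mono (f := fun y => (y - y^3/6 + y^5/120) - Real.sin y)
    (f' := fun y => (1 - 3*y^2/6 + 5*y^4/120) - Real.cos y)
    (fun y => by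
      have h2 : HasDerivAt (fun y : ℝ => y - y^3/6 + y^5/120) (1 - 3*y^2/6 + 5*y^4/120) y := by
        have := ((hasDerivAt_id y).sub ((hasDerivAt_pow 3 y).div_const 6)).add
          ((hasDerivAt_pow 5 y).div_const 120)
        exact this.congr_deriv (by push_cast; ring)
      exact (h2.sub (Real.hasDerivAt_sin y)).congr_deriv (by ring))
    (fun y hy _ => by nlinarith [cos_le_taylor hy]) hx
  have h2 : (0 - 0^3/6 + 0^5/120) - Real.sin 0 ≤ (x - x^3/6 + x^5/120) - Real.sin x := h
  have h3 : Real.sin 0 = 0 := Real.sin_zero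
  nlinarith [h2, h3]

lemma cos_ge_taylor {x : ℝ} (hx : 0 ≤ x) : 1 - x^2/2 + x^4/24 - x^6/720 ≤ Real.cos x := by
  have h := aux_mono (f := fun y => Real.cos y - (1 - y^2/2 + y^4/24 - y^6/720))
    (f' := fun y => -Real.sin y - (-(2*y)/2 + 4*y^3/24 - 6*y^5/720))
    (fun y => by
      have h2 : HasDerivAt (fun y : ℝ => 1 - y^2/2 + y^4/24 - y^6/720)
          (-(2*y)/2 + 4*y^3/24 - 6*y^5/720) y := by
        have := ((((hasDerivAt_pow 2 y).div_const 2).const_sub 1).add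
          ((hasDerivAt_pow 4 y).div_const 24)).sub ((hasDerivAt_pow 6 y).div_const 720)
        exact this.congr_deriv (by push_cast; ring)
      exact (Real.hasDerivAt_cos y).sub h2)
    (fun y hy _ => by nlinarith [sin_le_taylor hy]) hx
  have h2 : Real.cos 0 - (1 - 0^2/2 + 0^4/24 - 0^6/720) ≤
      Real.cos x - (1 - x^2/2 + x^4/24 - x^6/720) := h
  linarith [h2, Real.cos_zero]

lemma Qf_le_taylor {x : ℝ} (hx : 0 ≤ x) : Qf x ≤ x^3/3 - 2*x^5/15 + 2*x^7/105 := by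
  have h := aux_mono (f := fun y => (y^3/3 - 2*y^5/15 + 2*y^7/105) - Qf y)
    (f' := fun y => (3*y^2/3 - 2*(5*y^4)/15 + 2*(7*y^6)/105) - y * Real.sin (2*y) / 2)
    (fun y => by
      have h2 : HasDerivAt (fun y : ℝ => y^3/3 - 2*y^5/15 + 2*y^7/105)
          (3*y^2/3 - 2*(5*y^4)/15 + 2*(7*y^6)/105) y := by
        have := (((hasDerivAt_pow 3 y).div_const 3).sub
          (((hasDerivAt_pow 5 y).const_mul 2).div_const 15)).add
          (((hasDerivAt_pow 7 y).const_mul 2).div_const 105)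
        exact this.congr_deriv (by push_cast; ring)
      exact h2.sub (hasDerivAt_Qf y))
    (fun y hy _ => by
      have h5 : Real.sin (2*y) ≤ 2*y - (2*y)^3/6 + (2*y)^5/120 := sin_le_taylor (by linarith)
      nlinarith [mul_le_mul_of_nonneg_left h5 hy])
    hx
  have h0 : Qf 0 = 0 := by simp [Qf]
  have h2 : (0^3/3 - 2*0^5/15 + 2*0^7/105) - Qf 0 ≤
      (x^3/3 - 2*x^5/15 + 2*x^7/105) - Qf x := h
  nlinarith [h2, h0]

-- tangent line bound for sin
lemma sin_tangent {α x : ℝ} (h0 : 0 ≤ α) (hax : α ≤ x) (hx : x ≤ π) :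
    Real.sin x ≤ Real.sin α + (x - α) * Real.cos α := by
  have h := aux_mono (a := α) (b := x)
    (f := fun y => Real.sin α + (y - α) * Real.cos α - Real.sin y)
    (f' := fun y => Real.cos α - Real.cos y)
    (fun y => by
      have h2 : HasDerivAt (fun y : ℝ => Real.sin α + (y - α) * Real.cos α)
          (Real.cos α) y := by
        have := (((hasDerivAt_id y).sub_const α).mul_const (Real.cos α)).const_add (Real.sin α)
        exact this.congr_deriv (by simp)
      exact h2.sub (Real.hasDerivAt_sin y))
    (fun y hy hyx => by
      have : Real.cos y ≤ Real.cos α :=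
        Real.cos_le_cos_of_nonneg_of_le_pi h0 (le_trans hyx hx) hy
      show (0:ℝ) ≤ Real.cos α - Real.cos y
      linarith)
    hax
  have h2 : Real.sin α + (α - α) * Real.cos α - Real.sin α ≤
      Real.sin α + (x - α) * Real.cos α - Real.sin x := h
  linarith

lemma trap {α β : ℝ} (h0 : 0 ≤ α) (hab : α ≤ β) (hb : β ≤ π) :
    2*(Qf β - Qf α) ≤ (Real.cos α + Real.cos β) * (Pf β - Pf α) := by
  have h := aux_mono (a := α) (b := β)
    (f := fun y => (Real.cos α + Real.cos y) * (Pf y - Pf α) - 2*(Qf y - Qf α))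
    (f' := fun y => (-Real.sin y) * (Pf y - Pf α) + (Real.cos α + Real.cos y) * (y * Real.sin y)
        - 2*(y * Real.sin (2*y) / 2))
    (fun y => by
      have h1 : HasDerivAt (fun y : ℝ => (Real.cos α + Real.cos y) * (Pf y - Pf α))
          ((-Real.sin y) * (Pf y - Pf α) + (Real.cos α + Real.cos y) * (y * Real.sin y)) y := by
        have := ((Real.hasDerivAt_cos y).const_add (Real.cos α)).mul
          ((hasDerivAt_Pf y).sub_const (Pf α))
        exact this.congr_deriv (by ring)
      exact h1.sub (((hasDerivAt_Qf y).sub_const (Qf α)).const_mul 2)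
    )
    (fun y hy hyb => by
      have hsy : 0 ≤ Real.sin y := Real.sin_nonneg_of_nonneg_of_le_pi (le_trans h0 hy)
        (le_trans hyb hb)
      have htan : Real.sin y ≤ Real.sin α + (y - α) * Real.cos α :=
        sin_tangent h0 hy (le_trans hyb hb)
      have hkey : (-Real.sin y) * (Pf y - Pf α) + (Real.cos α + Real.cos y) * (y * Real.sin y)
          - 2*(y * Real.sin (2*y) / 2)
          = Real.sin y * (Real.sin α + (y - α) * Real.cos α - Real.sin y) := by
        simp only [Pf]
        rw [Real.sin_two_mul]
        ring
      show (0:ℝ) ≤ (-Real.sin y) * (Pf y - Pf α) + (Real.cos α + Real.cos y) * (y * Real.sin y)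
        - 2*(y * Real.sin (2*y) / 2)
      rw [hkey]
      exact mul_nonneg hsy (by linarith))
    hab
  have h2 : (Real.cos α + Real.cos α) * (Pf α - Pf α) - 2*(Qf α - Qf α) ≤
      (Real.cos α + Real.cos β) * (Pf β - Pf α) - 2*(Qf β - Qf α) := h
  linarith

lemma Pf_strictMono : StrictMonoOn Pf (Set.Icc 0 (π/2)) := by
  apply strictMonoOn_of_deriv_pos (convex_Icc 0 (π/2))
  · exact (Real.continuous_sin.sub (continuous_id.mul Real.continuous_cos)).continuousOn
  · intro x hx
    rw [interior_Icc, Set.mem_Ioo] at hx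
    rw [(hasDerivAt_Pf x).deriv]
    exact mul_pos hx.1 (Real.sin_pos_of_pos_of_lt_pi hx.1 (by linarith [Real.pi_pos]))

lemma Qf_mono : MonotoneOn Qf (Set.Icc 0 (π/2)) := by
  apply monotoneOn_of_deriv_nonneg (convex_Icc 0 (π/2))
  · exact ((Real.continuous_sin.comp (continuous_const.mul continuous_id)).div_const 8 |>.sub
      ((continuous_id.mul (Real.continuous_cos.comp (continuous_const.mul continuous_id))).div_const 4)).continuousOn
  · exact fun x _ => (hasDerivAt_Qf x).differentiableAt.differentiableWithinAt
  · intro x hx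
    rw [interior_Icc, Set.mem_Ioo] at hx
    rw [(hasDerivAt_Qf x).deriv]
    have : 0 ≤ Real.sin (2*x) := Real.sin_nonneg_of_nonneg_of_le_pi (by linarith)
      (by linarith [hx.2])
    have := hx.1
    positivity

lemma Pf_zero : Pf 0 = 0 := by simp [Pf]
lemma Pf_pi_div_two : Pf (π/2) = 1 := by simp [Pf]
lemma Qf_pi_div_two : Qf (π/2) = π/8 := by
  have : (2:ℝ) * (π/2) = π := by ring
  simp [Qf, this]
  ring


lemma g_eq {x : ℝ} (h0 : 0 ≤ x) (h1 : x ≤ 1) : g x = Pf (Real.arccos x) / π := by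
  unfold g Pf
  rw [Real.cos_arccos (by linarith) h1, Real.sin_arccos]
  ring

lemma arccos_mem {x : ℝ} (h0 : 0 ≤ x) (h1 : x ≤ 1) : Real.arccos x ∈ Set.Icc 0 (π/2) :=
  ⟨Real.arccos_nonneg x, Real.arccos_le_pi_div_two.2 h0⟩

lemma g_cos {t : ℝ} (h0 : 0 ≤ t) (h1 : t ≤ π/2) : g (Real.cos t) = Pf t / π := by
  have hc0 : 0 ≤ Real.cos t := Real.cos_nonneg_of_mem_Icc ⟨by linarith, h1⟩
  have hc1 : Real.cos t ≤ 1 := Real.cos_le_one t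
  rw [g_eq hc0 hc1, Real.arccos_cos h0 (by linarith [Real.pi_pos])]

lemma G_anti {μ x y : ℝ} (hμ : 0 < μ) (hx : 0 ≤ x) (hxy : x ≤ y) (hy : y ≤ μ) :
    G μ y ≤ G μ x := by
  have hx1 : x / μ ≤ 1 := by rw [div_le_one hμ]; linarith
  have hy1 : y / μ ≤ 1 := by rw [div_le_one hμ]; linarith
  have hx0 : 0 ≤ x / μ := by positivity
  have hy0 : 0 ≤ y / μ := div_nonneg (by linarith) hμ.le
  have hdiv : x / μ ≤ y / μ := by gcongr
  unfold G
  rw [g_eq hx0 hx1, g_eq hy0 hy1]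
  have harc : Real.arccos (y/μ) ≤ Real.arccos (x/μ) :=
    Real.strictAntiOn_arccos.antitoneOn ⟨by linarith, hx1⟩ ⟨by linarith, hy1⟩ hdiv
  have hP : Pf (Real.arccos (y/μ)) ≤ Pf (Real.arccos (x/μ)) :=
    Pf_strictMono.monotoneOn (arccos_mem hy0 hy1) (arccos_mem hx0 hx1) harc
  have hπ := Real.pi_pos
  gcongr

lemma G_nonneg {μ x : ℝ} (hμ : 0 < μ) (hx : 0 ≤ x) (hxμ : x ≤ μ) : 0 ≤ G μ x := by
  have hx1 : x / μ ≤ 1 := by rw [div_le_one hμ]; linarith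
  have hx0 : 0 ≤ x / μ := by positivity
  unfold G
  rw [g_eq hx0 hx1]
  have hP : Pf 0 ≤ Pf (Real.arccos (x/μ)) :=
    Pf_strictMono.monotoneOn (by constructor <;> [rfl; positivity] : (0:ℝ) ∈ Set.Icc 0 (π/2))
      (arccos_mem hx0 hx1) (Real.arccos_nonneg _)
  rw [Pf_zero] at hP
  have hπ := Real.pi_pos
  positivity

lemma G_zero {μ : ℝ} (hμ : 0 < μ) : G μ 0 = μ / π := by
  unfold G g
  rw [zero_div]
  norm_num
  field_simp


lemma endgameA {u : ℝ} (hu : 0 < u) (hub : u ≤ 0.561) :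
    1 + u^3 ≤ π*((1 - (u*(1+u^2/20))^2/2 + (u*(1+u^2/20))^4/24 - (u*(1+u^2/20))^6/720)
      - ((1/2)*(1+u^2/20)^3 - (1/5)*u^2*(1+u^2/20)^5 + (1/35)*u^4*(1+u^2/20)^7) - 0.0014) := by
  have hπ3 : (3.141592:ℝ) < π := Real.pi_gt_d6
  have key : 0.31831 + 0.31831 * u^3 + 0.0014
      ≤ (1 - (u*(1+u^2/20))^2/2 + (u*(1+u^2/20))^4/24 - (u*(1+u^2/20))^6/720)
      - ((1/2)*(1+u^2/20)^3 - (1/5)*u^2*(1+u^2/20)^5 + (1/35)*u^4*(1+u^2/20)^7) := by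
    nlinarith [
      mul_nonneg (sub_nonneg.2 hub) (pow_nonneg hu.le 0),
      mul_nonneg (sub_nonneg.2 hub) (pow_nonneg hu.le 1),
      mul_nonneg (sub_nonneg.2 hub) (pow_nonneg hu.le 2),
      mul_nonneg (sub_nonneg.2 hub) (pow_nonneg hu.le 3),
      mul_nonneg (sub_nonneg.2 hub) (pow_nonneg hu.le 4),
      mul_nonneg (sub_nonneg.2 hub) (pow_nonneg hu.le 5),
      mul_nonneg (sub_nonneg.2 hub) (pow_nonneg hu.le 6),
      mul_nonneg (sub_nonneg.2 hub) (pow_nonneg hu.le 7),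
      mul_nonneg (sub_nonneg.2 hub) (pow_nonneg hu.le 8),
      mul_nonneg (sub_nonneg.2 hub) (pow_nonneg hu.le 9),
      mul_nonneg (sub_nonneg.2 hub) (pow_nonneg hu.le 10),
      mul_nonneg (sub_nonneg.2 hub) (pow_nonneg hu.le 11),
      mul_nonneg (sub_nonneg.2 hub) (pow_nonneg hu.le 12),
      mul_nonneg (sub_nonneg.2 hub) (pow_nonneg hu.le 13),
      mul_nonneg (sub_nonneg.2 hub) (pow_nonneg hu.le 14),
      mul_nonneg (sub_nonneg.2 hub) (pow_nonneg hu.le 15),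
      mul_nonneg (sub_nonneg.2 hub) (pow_nonneg hu.le 16),
      mul_nonneg (sub_nonneg.2 hub) (pow_nonneg hu.le 17),
      hu.le]
  have hpos : 0 ≤ ((1 - (u*(1+u^2/20))^2/2 + (u*(1+u^2/20))^4/24 - (u*(1+u^2/20))^6/720)
      - ((1/2)*(1+u^2/20)^3 - (1/5)*u^2*(1+u^2/20)^5 + (1/35)*u^4*(1+u^2/20)^7) - 0.0014) := by
    linarith only [key, pow_nonneg hu.le 3]
  have h2 : 0 ≤ (π - 3.141592) * ((1 - (u*(1+u^2/20))^2/2 + (u*(1+u^2/20))^4/24 - (u*(1+u^2/20))^6/720)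
      - ((1/2)*(1+u^2/20)^3 - (1/5)*u^2*(1+u^2/20)^5 + (1/35)*u^4*(1+u^2/20)^7) - 0.0014) := mul_nonneg (by linarith) hpos
  linarith only [key, h2, pow_nonneg hu.le 3]

lemma endgameB {u : ℝ} (hu : 0 < u) (hub : u ≤ 0.58123) :
    16*u^3 ≤ 3*π*((1 - (u*(1+u^2/20))^2/2 + (u*(1+u^2/20))^4/24 - (u*(1+u^2/20))^6/720)
      - ((1/2)*(1+u^2/20)^3 - (1/5)*u^2*(1+u^2/20)^5 + (1/35)*u^4*(1+u^2/20)^7) - 0.0014) := by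
  have hπ3 : (3.141592:ℝ) < π := Real.pi_gt_d6
  have key : 16*u^3 ≤ 3*3.141592*((1 - (u*(1+u^2/20))^2/2 + (u*(1+u^2/20))^4/24 - (u*(1+u^2/20))^6/720)
      - ((1/2)*(1+u^2/20)^3 - (1/5)*u^2*(1+u^2/20)^5 + (1/35)*u^4*(1+u^2/20)^7) - 0.0014) := by
    nlinarith [
      mul_nonneg (sub_nonneg.2 hub) (pow_nonneg hu.le 0),
      mul_nonneg (sub_nonneg.2 hub) (pow_nonneg hu.le 1),
      mul_nonneg (sub_nonneg.2 hub) (pow_nonneg hu.le 2),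
      mul_nonneg (sub_nonneg.2 hub) (pow_nonneg hu.le 3),
      mul_nonneg (sub_nonneg.2 hub) (pow_nonneg hu.le 4),
      mul_nonneg (sub_nonneg.2 hub) (pow_nonneg hu.le 5),
      mul_nonneg (sub_nonneg.2 hub) (pow_nonneg hu.le 6),
      mul_nonneg (sub_nonneg.2 hub) (pow_nonneg hu.le 7),
      mul_nonneg (sub_nonneg.2 hub) (pow_nonneg hu.le 8),
      mul_nonneg (sub_nonneg.2 hub) (pow_nonneg hu.le 9),
      mul_nonneg (sub_nonneg.2 hub) (pow_nonneg hu.le 10),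
      mul_nonneg (sub_nonneg.2 hub) (pow_nonneg hu.le 11),
      mul_nonneg (sub_nonneg.2 hub) (pow_nonneg hu.le 12),
      mul_nonneg (sub_nonneg.2 hub) (pow_nonneg hu.le 13),
      mul_nonneg (sub_nonneg.2 hub) (pow_nonneg hu.le 14),
      mul_nonneg (sub_nonneg.2 hub) (pow_nonneg hu.le 15),
      mul_nonneg (sub_nonneg.2 hub) (pow_nonneg hu.le 16),
      mul_nonneg (sub_nonneg.2 hub) (pow_nonneg hu.le 17),
      hu.le]
  have hpos : 0 ≤ ((1 - (u*(1+u^2/20))^2/2 + (u*(1+u^2/20))^4/24 - (u*(1+u^2/20))^6/720)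
      - ((1/2)*(1+u^2/20)^3 - (1/5)*u^2*(1+u^2/20)^5 + (1/35)*u^4*(1+u^2/20)^7) - 0.0014) := by
    linarith only [key, pow_nonneg hu.le 3]
  have h2 : 0 ≤ 3*(π - 3.141592) * ((1 - (u*(1+u^2/20))^2/2 + (u*(1+u^2/20))^4/24 - (u*(1+u^2/20))^6/720)
      - ((1/2)*(1+u^2/20)^3 - (1/5)*u^2*(1+u^2/20)^5 + (1/35)*u^4*(1+u^2/20)^7) - 0.0014) := by
    apply mul_nonneg _ hpos
    linarith
  linarith only [key, h2]

lemma tu_le {u : ℝ} (hu : 0 < u) (hub : u ≤ 0.58123) : u*(1+u^2/20) ≤ π/2 := by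
  have hπ3 : (3.141592:ℝ) < π := Real.pi_gt_d6
  nlinarith [
      mul_nonneg (sub_nonneg.2 hub) (pow_nonneg hu.le 0),
      mul_nonneg (sub_nonneg.2 hub) (pow_nonneg hu.le 1),
      mul_nonneg (sub_nonneg.2 hub) (pow_nonneg hu.le 2),
      mul_nonneg (sub_nonneg.2 hub) (pow_nonneg hu.le 3),
      mul_nonneg (sub_nonneg.2 hub) (pow_nonneg hu.le 4),
      mul_nonneg (sub_nonneg.2 hub) (pow_nonneg hu.le 5),
      mul_nonneg (sub_nonneg.2 hub) (pow_nonneg hu.le 6),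
      mul_nonneg (sub_nonneg.2 hub) (pow_nonneg hu.le 7),
      mul_nonneg (sub_nonneg.2 hub) (pow_nonneg hu.le 8),
      mul_nonneg (sub_nonneg.2 hub) (pow_nonneg hu.le 9),
      mul_nonneg (sub_nonneg.2 hub) (pow_nonneg hu.le 10),
      mul_nonneg (sub_nonneg.2 hub) (pow_nonneg hu.le 11),
      mul_nonneg (sub_nonneg.2 hub) (pow_nonneg hu.le 12),
      mul_nonneg (sub_nonneg.2 hub) (pow_nonneg hu.le 13),
      mul_nonneg (sub_nonneg.2 hub) (pow_nonneg hu.le 14),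
      mul_nonneg (sub_nonneg.2 hub) (pow_nonneg hu.le 15),
      mul_nonneg (sub_nonneg.2 hub) (pow_nonneg hu.le 16),
      mul_nonneg (sub_nonneg.2 hub) (pow_nonneg hu.le 17),
    hu.le]

lemma Pftu_ge {u : ℝ} (hu : 0 < u) (hub : u ≤ 0.58123) : u^3/3 ≤ Pf (u*(1+u^2/20)) := by
  have ht0 : (0:ℝ) ≤ u*(1+u^2/20) := by positivity
  have h1 := sin_ge_taylor ht0
  have h2 := cos_le_taylor ht0
  have h3 := mul_le_mul_of_nonneg_left h2 ht0
  have h4 : u^3/3 ≤ (u*(1+u^2/20))^3/3 - (u*(1+u^2/20))^5/24 := by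
    nlinarith [
      mul_nonneg (sub_nonneg.2 hub) (pow_nonneg hu.le 0),
      mul_nonneg (sub_nonneg.2 hub) (pow_nonneg hu.le 1),
      mul_nonneg (sub_nonneg.2 hub) (pow_nonneg hu.le 2),
      mul_nonneg (sub_nonneg.2 hub) (pow_nonneg hu.le 3),
      mul_nonneg (sub_nonneg.2 hub) (pow_nonneg hu.le 4),
      mul_nonneg (sub_nonneg.2 hub) (pow_nonneg hu.le 5),
      mul_nonneg (sub_nonneg.2 hub) (pow_nonneg hu.le 6),
      mul_nonneg (sub_nonneg.2 hub) (pow_nonneg hu.le 7),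
      mul_nonneg (sub_nonneg.2 hub) (pow_nonneg hu.le 8),
      mul_nonneg (sub_nonneg.2 hub) (pow_nonneg hu.le 9),
      mul_nonneg (sub_nonneg.2 hub) (pow_nonneg hu.le 10),
      mul_nonneg (sub_nonneg.2 hub) (pow_nonneg hu.le 11),
      mul_nonneg (sub_nonneg.2 hub) (pow_nonneg hu.le 12),
      mul_nonneg (sub_nonneg.2 hub) (pow_nonneg hu.le 13),
      mul_nonneg (sub_nonneg.2 hub) (pow_nonneg hu.le 14),
      mul_nonneg (sub_nonneg.2 hub) (pow_nonneg hu.le 15),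
      mul_nonneg (sub_nonneg.2 hub) (pow_nonneg hu.le 16),
      mul_nonneg (sub_nonneg.2 hub) (pow_nonneg hu.le 17),
      hu.le]
  unfold Pf
  nlinarith [h1, h3, h4]

set_option maxHeartbeats 1000000 in
/-- Theorem 1.5: for every `μ ≥ 12`, `𝒫^N_2(μ) ≥ μ²/4 + 0.0014·μ` (improvement
of the Neumann Pólya conjecture for the unit disk). -/
theorem stmt7 (μ : ℝ) (hμ : 12 ≤ μ) : latticePN2 μ ≥ μ ^ 2 / 4 + 0.0014 * μ := by
  have hπ3 : (3.141592:ℝ) < π := Real.pi_gt_d6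
  have hπ4 : π < 3.141593 := Real.pi_lt_d6
  have hπ0 : (0:ℝ) < π := by linarith
  have hμ0 : (0:ℝ) < μ := by linarith
  obtain ⟨K, hKdef⟩ : ∃ K, K = ⌊μ/Real.pi + 3/4⌋₊ := ⟨_, rfl⟩
  have hyK0 : (0:ℝ) ≤ μ/π + 3/4 := by positivity
  have hKle : (K:ℝ) ≤ μ/π + 3/4 := by rw [hKdef]; exact Nat.floor_le hyK0
  have hKgt : μ/π + 3/4 < (K:ℝ) + 1 := by rw [hKdef]; exact Nat.lt_floor_add_one _
  have hmupi : (13/4:ℝ) ≤ μ/π := by rw [le_div_iff₀ hπ0]; nlinarith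
  have hK4 : 4 ≤ K := by
    rw [hKdef]
    apply Nat.le_floor
    push_cast
    linarith
  have hK1 : 1 ≤ K := by omega
  have hfloorK : (⌊μ/Real.pi + 3/4⌋ : ℝ) = (K:ℝ) := by
    rw [← Int.natCast_floor_eq_floor hyK0, hKdef]
    norm_cast
  -- existence of θ
  have hcontPf : ContinuousOn Pf (Set.Icc 0 (π/2)) :=
    (Real.continuous_sin.sub (continuous_id.mul Real.continuous_cos)).continuousOn
  have hex : ∀ k : ℕ, ∃ t, t ∈ Set.Icc 0 (π/2) ∧
      ((1 ≤ k ∧ k ≤ K) → Pf t = π*((k:ℝ) - 3/4)/μ) := by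
    intro k
    by_cases hk : 1 ≤ k ∧ k ≤ K
    · have hk1 : (1:ℝ) ≤ (k:ℝ) := by exact_mod_cast hk.1
      have hkK : (k:ℝ) ≤ (K:ℝ) := by exact_mod_cast hk.2
      have hy0 : 0 ≤ π*((k:ℝ) - 3/4)/μ := by
        apply div_nonneg _ hμ0.le
        apply mul_nonneg hπ0.le
        linarith
      have hy1 : π*((k:ℝ) - 3/4)/μ ≤ 1 := by
        rw [div_le_one hμ0]
        have h2 : (k:ℝ) - 3/4 ≤ μ/π := by linarith
        calc π*((k:ℝ) - 3/4) ≤ π*(μ/π) := by nlinarith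
          _ = μ := by field_simp
      have hIV := intermediate_value_Icc (by positivity : (0:ℝ) ≤ π/2) hcontPf
      have hmem : π*((k:ℝ) - 3/4)/μ ∈ Set.Icc (Pf 0) (Pf (π/2)) := by
        rw [Pf_zero, Pf_pi_div_two]; exact ⟨hy0, hy1⟩
      obtain ⟨t, ht, hPt⟩ := hIV hmem
      exact ⟨t, ht, fun _ => hPt⟩
    · exact ⟨0, ⟨le_refl 0, by positivity⟩, fun h => absurd h hk⟩
  choose θ hθmem hθval using hex
  have hθ0 : ∀ k, 0 ≤ θ k := fun k => (hθmem k).1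
  have hθπ2 : ∀ k, θ k ≤ π/2 := fun k => (hθmem k).2
  have hcosθ0 : ∀ k, 0 ≤ Real.cos (θ k) :=
    fun k => Real.cos_nonneg_of_mem_Icc ⟨by linarith [hθ0 k], hθπ2 k⟩
  have hθmono : ∀ k l : ℕ, 1 ≤ k → k ≤ l → l ≤ K → θ k ≤ θ l := by
    intro k l h1 h2 h3
    by_contra hcon
    push_neg at hcon
    have hlt := Pf_strictMono (hθmem l) (hθmem k) hcon
    rw [hθval k ⟨h1, le_trans h2 h3⟩, hθval l ⟨le_trans h1 h2, h3⟩] at hlt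
    have hkl : (k:ℝ) ≤ (l:ℝ) := by exact_mod_cast h2
    have h4 := (div_lt_div_iff₀ hμ0 hμ0).1 hlt
    nlinarith [mul_nonneg (mul_nonneg hπ0.le hμ0.le) (sub_nonneg.2 hkl)]
  -- the sum SA
  set SA := ∑ i ∈ Finset.range K, Real.cos (θ (i+1)) with hSAdef
  -- Counting: the floor sum is at least μ * SA
  have hSbound : μ * SA ≤ ∑ m ∈ Finset.range (⌊μ⌋₊ + 1), ((⌊G μ (m:ℝ) + 3/4⌋ : ℤ) : ℝ) := by
    -- each m: floor = card filter
    have hmle : ∀ m ∈ Finset.range (⌊μ⌋₊ + 1), (m:ℝ) ≤ μ := by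
      intro m hm
      rw [Finset.mem_range] at hm
      have h1 : m ≤ ⌊μ⌋₊ := by omega
      calc (m:ℝ) ≤ (⌊μ⌋₊:ℝ) := by exact_mod_cast h1
        _ ≤ μ := Nat.floor_le hμ0.le
    have hident : ∀ m ∈ Finset.range (⌊μ⌋₊ + 1),
        ((⌊G μ (m:ℝ) + 3/4⌋ : ℤ) : ℝ)
          = (((Finset.range K).filter (fun i : ℕ => (i:ℝ) + 1 ≤ G μ (m:ℝ) + 3/4)).card : ℝ) := by
      intro m hm
      have hGm0 : 0 ≤ G μ (m:ℝ) := G_nonneg hμ0 (by positivity) (hmle m hm)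
      have hGmK : G μ (m:ℝ) ≤ μ/π := by
        have := G_anti hμ0 (le_refl 0) (by positivity : (0:ℝ) ≤ (m:ℝ)) (hmle m hm)
        rwa [G_zero hμ0] at this
      have hx0 : (0:ℝ) ≤ G μ (m:ℝ) + 3/4 := by linarith
      have hFK : ⌊G μ (m:ℝ) + 3/4⌋₊ ≤ K := by
        rw [hKdef]; exact Nat.floor_mono (by linarith)
      have hfilter : (Finset.range K).filter (fun i : ℕ => (i:ℝ) + 1 ≤ G μ (m:ℝ) + 3/4)
          = Finset.range ⌊G μ (m:ℝ) + 3/4⌋₊ := by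
        ext i
        simp only [Finset.mem_filter, Finset.mem_range]
        constructor
        · rintro ⟨_, h2⟩
          have : i + 1 ≤ ⌊G μ (m:ℝ) + 3/4⌋₊ := by
            rw [Nat.le_floor_iff hx0]
            push_cast
            linarith
          omega
        · intro h
          have h2 : ((i+1:ℕ):ℝ) ≤ G μ (m:ℝ) + 3/4 := by
            rw [← Nat.le_floor_iff hx0]
            omega
          push_cast at h2
          exact ⟨by omega, by linarith⟩
      rw [hfilter, Finset.card_range]
      rw [← Int.natCast_floor_eq_floor hx0]
      norm_cast
    rw [Finset.sum_congr rfl hident]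
    -- swap
    have hswap : ∑ m ∈ Finset.range (⌊μ⌋₊ + 1),
        (((Finset.range K).filter (fun i : ℕ => (i:ℝ) + 1 ≤ G μ (m:ℝ) + 3/4)).card)
        = ∑ i ∈ Finset.range K,
        (((Finset.range (⌊μ⌋₊ + 1)).filter (fun m : ℕ => (i:ℝ) + 1 ≤ G μ (m:ℝ) + 3/4)).card) := by
      simp only [Finset.card_filter]
      exact Finset.sum_comm
    have hcast : (∑ m ∈ Finset.range (⌊μ⌋₊ + 1),
        ((((Finset.range K).filter (fun i : ℕ => (i:ℝ) + 1 ≤ G μ (m:ℝ) + 3/4)).card : ℕ) : ℝ))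
        = ((∑ m ∈ Finset.range (⌊μ⌋₊ + 1),
        (((Finset.range K).filter (fun i : ℕ => (i:ℝ) + 1 ≤ G μ (m:ℝ) + 3/4)).card) : ℕ) : ℝ) := by
      push_cast; rfl
    rw [hcast, hswap]
    push_cast
    rw [hSAdef, Finset.mul_sum]
    apply Finset.sum_le_sum
    intro i hi
    rw [Finset.mem_range] at hi
    -- per k = i+1 bound
    have hk1 : 1 ≤ i + 1 := by omega
    have hkK : i + 1 ≤ K := by omega
    have hPfk : Pf (θ (i+1)) = π*(((i+1:ℕ):ℝ) - 3/4)/μ := hθval (i+1) ⟨hk1, hkK⟩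
    set X := μ * Real.cos (θ (i+1)) with hXdef
    have hX0 : 0 ≤ X := mul_nonneg hμ0.le (hcosθ0 (i+1))
    have hXμ : X ≤ μ := by
      rw [hXdef]
      nlinarith [Real.cos_le_one (θ (i+1))]
    have hGX : G μ X = ((i+1:ℕ):ℝ) - 3/4 := by
      have hXdiv : X / μ = Real.cos (θ (i+1)) := by
        rw [hXdef]; field_simp
      unfold G
      rw [hXdiv, g_cos (hθ0 (i+1)) (hθπ2 (i+1)), hPfk]
      field_simp
    have hsub : Finset.range (⌊X⌋₊ + 1) ⊆
        (Finset.range (⌊μ⌋₊ + 1)).filter (fun m : ℕ => (i:ℝ) + 1 ≤ G μ (m:ℝ) + 3/4) := by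
      intro m hm
      rw [Finset.mem_range] at hm
      have hmX : (m:ℝ) ≤ X := by
        have h1 : m ≤ ⌊X⌋₊ := by omega
        calc (m:ℝ) ≤ (⌊X⌋₊:ℝ) := by exact_mod_cast h1
          _ ≤ X := Nat.floor_le hX0
      rw [Finset.mem_filter, Finset.mem_range]
      constructor
      · have : ⌊X⌋₊ ≤ ⌊μ⌋₊ := Nat.floor_le_floor hXμ
        omega
      · have hGm : G μ X ≤ G μ (m:ℝ) := G_anti hμ0 (by positivity) hmX (by linarith)
        rw [hGX] at hGm
        push_cast at hGm
        linarith
    have hcard := Finset.card_le_card hsub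
    rw [Finset.card_range] at hcard
    have hXlt : X < (⌊X⌋₊:ℝ) + 1 := Nat.lt_floor_add_one X
    calc μ * Real.cos (θ (i+1)) = X := hXdef.symm
      _ ≤ (⌊X⌋₊:ℝ) + 1 := hXlt.le
      _ ≤ _ := by exact_mod_cast hcard
  -- telescope
  obtain ⟨J, hJ⟩ : ∃ J, K = J + 1 := ⟨K - 1, by omega⟩
  have htrap_i : ∀ i ∈ Finset.range J,
      2*μ * (Qf (θ (i+1+1)) - Qf (θ (i+1))) ≤ π * (Real.cos (θ (i+1)) + Real.cos (θ (i+1+1))) := by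
    intro i hi
    rw [Finset.mem_range] at hi
    have hPf1 : Pf (θ (i+1)) = π*(((i+1:ℕ):ℝ) - 3/4)/μ := hθval (i+1) ⟨by omega, by omega⟩
    have hPf2 : Pf (θ (i+1+1)) = π*(((i+1+1:ℕ):ℝ) - 3/4)/μ := hθval (i+1+1) ⟨by omega, by omega⟩
    have hmono := hθmono (i+1) (i+1+1) (by omega) (by omega) (by omega)
    have ht := trap (hθ0 (i+1)) hmono (by linarith [hθπ2 (i+1+1)])
    rw [hPf1, hPf2] at ht
    have hdiff : π*(((i+1+1:ℕ):ℝ) - 3/4)/μ - π*(((i+1:ℕ):ℝ) - 3/4)/μ = π/μ := by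
      push_cast
      field_simp
      ring
    rw [hdiff] at ht
    have h3 := mul_le_mul_of_nonneg_left ht hμ0.le
    have h4 : μ * ((Real.cos (θ (i+1)) + Real.cos (θ (i+1+1))) * (π/μ))
        = π * (Real.cos (θ (i+1)) + Real.cos (θ (i+1+1))) := by
      field_simp
    calc 2*μ * (Qf (θ (i+1+1)) - Qf (θ (i+1)))
        = μ * (2*(Qf (θ (i+1+1)) - Qf (θ (i+1)))) := by ring
      _ ≤ μ * ((Real.cos (θ (i+1)) + Real.cos (θ (i+1+1))) * (π/μ)) := h3
      _ = π * (Real.cos (θ (i+1)) + Real.cos (θ (i+1+1))) := h4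
  have hQtel : ∑ i ∈ Finset.range J, (Qf (θ (i+1+1)) - Qf (θ (i+1))) = Qf (θ K) - Qf (θ 1) := by
    rw [hJ]
    exact Finset.sum_range_sub (fun i => Qf (θ (i+1))) J
  have hbtel : ∑ i ∈ Finset.range J, (Real.cos (θ (i+1)) + Real.cos (θ (i+1+1)))
      = 2 * SA - Real.cos (θ 1) - Real.cos (θ K) := by
    rw [Finset.sum_add_distrib]
    have h1 : ∑ i ∈ Finset.range J, Real.cos (θ (i+1)) = SA - Real.cos (θ K) := by
      rw [hSAdef, hJ, Finset.sum_range_succ]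
      ring
    have h2 : ∑ i ∈ Finset.range J, Real.cos (θ (i+1+1)) = SA - Real.cos (θ 1) := by
      rw [hSAdef, hJ, Finset.sum_range_succ']
      ring
    rw [h1, h2]
    ring
  have hA : 2*μ*(Qf (θ K) - Qf (θ 1)) ≤ π*(2*SA - Real.cos (θ 1) - Real.cos (θ K)) := by
    calc 2*μ*(Qf (θ K) - Qf (θ 1))
        = ∑ i ∈ Finset.range J, 2*μ*(Qf (θ (i+1+1)) - Qf (θ (i+1))) := by
          rw [← Finset.mul_sum, hQtel]
      _ ≤ ∑ i ∈ Finset.range J, π*(Real.cos (θ (i+1)) + Real.cos (θ (i+1+1))) :=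
          Finset.sum_le_sum htrap_i
      _ = π*(2*SA - Real.cos (θ 1) - Real.cos (θ K)) := by
          rw [← Finset.mul_sum, hbtel]
  -- endpoint
  have hPfK : Pf (θ K) = π*((K:ℝ) - 3/4)/μ := hθval K ⟨hK1, le_refl K⟩
  have hend := trap (hθ0 K) (hθπ2 K) (by linarith)
  rw [Qf_pi_div_two, Pf_pi_div_two, Real.cos_pi_div_two, hPfK] at hend
  have hend2 := mul_le_mul_of_nonneg_left hend hμ0.le
  have hend3 : μ * ((Real.cos (θ K) + 0) * (1 - π*((K:ℝ)-3/4)/μ))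
      = μ*Real.cos (θ K) - π*Real.cos (θ K)*((K:ℝ)-3/4) := by
    field_simp
    ring
  rw [hend3] at hend2
  have hKgt' : μ ≤ π*((K:ℝ) + 1/4) := by
    have h1 : μ/π < (K:ℝ) + 1/4 := by linarith
    have h2 := (div_lt_iff₀ hπ0).1 h1
    linarith
  have h6 : 0 ≤ Real.cos (θ K) * (π*((K:ℝ) + 1/4) - μ) :=
    mul_nonneg (hcosθ0 K) (by linarith)
  have hKey1 : π*Real.cos (θ 1) + π*μ/4 - 2*μ*Qf (θ 1) ≤ 2*π*SA := by nlinarith [hA, hend2, h6]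
  -- introduce u
  have hbase : (0:ℝ) < 3*π/(4*μ) := by positivity
  obtain ⟨u, hu0, hu3⟩ : ∃ u : ℝ, 0 < u ∧ u^3 = 3*π/(4*μ) := by
    refine ⟨(3*π/(4*μ)) ^ ((1:ℝ)/3), Real.rpow_pos_of_pos hbase _, ?_⟩
    rw [← Real.rpow_natCast ((3*π/(4*μ))^((1:ℝ)/3)) 3, ← Real.rpow_mul hbase.le]
    norm_num
  have hu3' : 4*μ*u^3 = 3*π := by
    rw [hu3]; field_simp
  have hub : u ≤ 0.58123 := by
    by_contra hcon
    push_neg at hcon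
    have h1 : (0.58123:ℝ)^3 < u^3 := by
      apply pow_lt_pow_left₀ hcon (by norm_num)
      norm_num
    rw [hu3] at h1
    have h2 : 3*π/(4*μ) ≤ 3*3.141593/48 :=
      div_le_div₀ (by norm_num) (by linarith only [hπ4]) (by norm_num) (by linarith only [hμ])
    linarith only [h1, h2]
  -- bounds on θ 1
  have hPf1 : Pf (θ 1) = π*((1:ℝ) - 3/4)/μ := by
    have := hθval 1 ⟨le_refl 1, hK1⟩
    push_cast at this
    exact this
  have hy1eq : π*((1:ℝ) - 3/4)/μ = u^3/3 := by
    rw [hu3]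
    field_simp
    ring
  have htu0 : (0:ℝ) ≤ u*(1+u^2/20) := by positivity
  have htuπ2 : u*(1+u^2/20) ≤ π/2 := tu_le hu0 hub
  have hθ1tu : θ 1 ≤ u*(1+u^2/20) := by
    by_contra hcon
    push_neg at hcon
    have hlt := Pf_strictMono ⟨htu0, htuπ2⟩ (hθmem 1) hcon
    rw [hPf1, hy1eq] at hlt
    linarith [Pftu_ge hu0 hub]
  have hcos1 : 1 - (u*(1+u^2/20))^2/2 + (u*(1+u^2/20))^4/24 - (u*(1+u^2/20))^6/720
      ≤ Real.cos (θ 1) := by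
    have h1 := cos_ge_taylor htu0
    have h2 : Real.cos (u*(1+u^2/20)) ≤ Real.cos (θ 1) :=
      Real.cos_le_cos_of_nonneg_of_le_pi (hθ0 1) (by linarith) hθ1tu
    linarith
  have hQ1 : Qf (θ 1) ≤ (u*(1+u^2/20))^3/3 - 2*(u*(1+u^2/20))^5/15 + 2*(u*(1+u^2/20))^7/105 := by
    have h1 := Qf_mono (hθmem 1) ⟨htu0, htuπ2⟩ hθ1tu
    have h2 := Qf_le_taylor htu0
    linarith
  -- identity: 2μ² RR = π μ W
  have hW2 : 2*μ^2*((u*(1+u^2/20))^3/3 - 2*(u*(1+u^2/20))^5/15 + 2*(u*(1+u^2/20))^7/105)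
      = π*μ*((1/2)*(1+u^2/20)^3 - (1/5)*u^2*(1+u^2/20)^5 + (1/35)*u^4*(1+u^2/20)^7) := by
    linear_combination (μ*((1+u^2/20)^3/6 - u^2*(1+u^2/20)^5/15 + u^4*(1+u^2/20)^7/105)) * hu3'
  -- the final bound on the k=1 term, π-scaled
  have hQb := mul_le_mul_of_nonneg_left hQ1 (by positivity : (0:ℝ) ≤ 2*μ^2)
  have hCb := mul_le_mul_of_nonneg_left hcos1 (by positivity : (0:ℝ) ≤ π*μ)
  have hfinπ : π*(0.0014*μ + (K:ℝ)) ≤ π*μ*Real.cos (θ 1) - 2*μ^2*Qf (θ 1) := by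
    have hgoal' : π*(0.0014*μ + (K:ℝ)) ≤
        π*μ*(1 - (u*(1+u^2/20))^2/2 + (u*(1+u^2/20))^4/24 - (u*(1+u^2/20))^6/720)
        - 2*μ^2*((u*(1+u^2/20))^3/3 - 2*(u*(1+u^2/20))^5/15 + 2*(u*(1+u^2/20))^7/105) := by
      rcases le_or_gt μ 13.35 with hcase | hcase
      · -- K = 4
        have hKeq : K = 4 := by
          rw [hKdef]
          rw [Nat.floor_eq_iff (by positivity)]
          constructor
          · push_cast; linarith
          · push_cast
            have : μ/π < 17/4 := by
              rw [div_lt_iff₀ hπ0]; nlinarith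
            linarith
        rw [hKeq]
        have hEB := endgameB hu0 hub
        have hEB2 := mul_le_mul_of_nonneg_left hEB (by positivity : (0:ℝ) ≤ μ/3)
        push_cast
        linarith only [hEB2, hW2, hu3']
      · -- μ ≥ 13.35
        have hubA : u ≤ 0.561 := by
          by_contra hcon
          push_neg at hcon
          have h1 : (0.561:ℝ)^3 < u^3 := by
            apply pow_lt_pow_left₀ hcon (by norm_num)
            norm_num
          rw [hu3] at h1
          have h2 : 3*π/(4*μ) ≤ 3*3.141593/53.4 :=
            div_le_div₀ (by norm_num) (by linarith only [hπ4]) (by norm_num)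
              (by linarith only [hcase])
          linarith only [h1, h2]
        have hEA := endgameA hu0 hubA
        have hEA2 := mul_le_mul_of_nonneg_left hEA hμ0.le
        have hπK : π*(K:ℝ) ≤ μ + 3*π/4 := by
          have h1 := mul_le_mul_of_nonneg_left hKle hπ0.le
          have h2 : π*(μ/π + 3/4) = μ + 3*π/4 := by field_simp
          linarith [h1, h2.le, h2.ge]
        linarith only [hEA2, hW2, hu3', hπK]
    linarith only [hgoal', hQb, hCb]
  -- final assembly
  have hKey2 := mul_le_mul_of_nonneg_left hKey1 hμ0.le
  have hS2 := mul_le_mul_of_nonneg_left hSbound (by positivity : (0:ℝ) ≤ 2*π)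
  unfold latticePN2
  rw [hfloorK]
  have hfinal : 0 ≤ π * (-(K:ℝ) + 2 * (∑ m ∈ Finset.range (⌊μ⌋₊ + 1),
      ((⌊G μ (m:ℝ) + 3/4⌋ : ℤ) : ℝ)) - (μ^2/4 + 0.0014*μ)) := by
    linarith only [hKey2, hS2, hfinπ]
  rcases lt_or_ge (-(K:ℝ) + 2 * (∑ m ∈ Finset.range (⌊μ⌋₊ + 1),
      ((⌊G μ (m:ℝ) + 3/4⌋ : ℤ) : ℝ)) - (μ^2/4 + 0.0014*μ)) 0 with hT | hT
  · exfalso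
    have := mul_neg_of_pos_of_neg hπ0 hT
    linarith only [hfinal, this]
  · linarith only [hT]
end

section
/- Let L > 0 and μ > 0 with Lμ/π ≥ 1. Then Σ_{l=1}^{⌊Lμ/π⌋} (μ² − (πl/L)²) ≤ (2L/(3π))·μ³ − (π²/(2L²))·⌊Lμ/π⌋·(⌊Lμ/π⌋ + 1/3). -/
lemma sumsq_icc (n : ℕ) :
    ∑ l ∈ Finset.Icc 1 n, ((l : ℝ)) ^ 2 = n * (n + 1) * (2 * n + 1) / 6 := by
  induction n with
  | zero => simp
  | succ k ih =>
    rw [Finset.sum_Icc_succ_top (by omega), ih]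
    push_cast
    ring

/-- For `L > 0`, `μ > 0` with `Lμ/π ≥ 1`:
`Σ_{l=1}^{⌊Lμ/π⌋} (μ² − (πl/L)²) ≤ (2L/(3π))μ³ − (π²/(2L²))⌊Lμ/π⌋(⌊Lμ/π⌋ + 1/3)`. -/
theorem stmt13 (L μ : ℝ) (hL : 0 < L) (hμ : 0 < μ) (h : 1 ≤ L * μ / Real.pi) :
    ∑ l ∈ Finset.Icc 1 ⌊L * μ / Real.pi⌋₊, (μ ^ 2 - (Real.pi * (l : ℝ) / L) ^ 2) ≤
      2 * L / (3 * Real.pi) * μ ^ 3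
      - Real.pi ^ 2 / (2 * L ^ 2) * (⌊L * μ / Real.pi⌋₊ : ℝ)
          * ((⌊L * μ / Real.pi⌋₊ : ℝ) + 1 / 3) := by
  have hπ : (0 : ℝ) < Real.pi := Real.pi_pos
  set N := ⌊L * μ / Real.pi⌋₊ with hNdef
  have hN : (N : ℝ) ≤ L * μ / Real.pi := Nat.floor_le (by positivity)
  have h1 : (1 : ℝ) ≤ (N : ℝ) := by
    have : 1 ≤ N := Nat.le_floor (by exact_mod_cast h)
    exact_mod_cast this
  have hsum : ∑ l ∈ Finset.Icc 1 N, (μ ^ 2 - (Real.pi * (l : ℝ) / L) ^ 2)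
      = (N : ℝ) * μ ^ 2 - (Real.pi / L) ^ 2 * ((N : ℝ) * (N + 1) * (2 * N + 1) / 6) := by
    rw [Finset.sum_sub_distrib, Finset.sum_const, Nat.card_Icc]
    have : ∑ l ∈ Finset.Icc 1 N, (Real.pi * (l : ℝ) / L) ^ 2
        = (Real.pi / L) ^ 2 * ∑ l ∈ Finset.Icc 1 N, ((l : ℝ)) ^ 2 := by
      rw [Finset.mul_sum]; apply Finset.sum_congr rfl; intro l _; ring
    rw [this, sumsq_icc]
    simp
  rw [hsum]
  have hmul : L * μ / Real.pi * Real.pi = L * μ := div_mul_cancel₀ _ hπ.ne'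
  have hNle : (N : ℝ) * Real.pi ≤ L * μ := by
    calc (N : ℝ) * Real.pi ≤ L * μ / Real.pi * Real.pi :=
      mul_le_mul_of_nonneg_right hN hπ.le
    _ = L * μ := hmul
  rw [← sub_nonneg]
  have heq : 2 * L / (3 * Real.pi) * μ ^ 3
      - Real.pi ^ 2 / (2 * L ^ 2) * (N : ℝ) * ((N : ℝ) + 1 / 3)
      - ((N : ℝ) * μ ^ 2 - (Real.pi / L) ^ 2 * ((N : ℝ) * (N + 1) * (2 * N + 1) / 6))
      = (L * μ - Real.pi * N) ^ 2 * (2 * (L * μ) + Real.pi * N)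
        / (3 * Real.pi * L ^ 2) := by
    field_simp
    ring
  rw [heq]
  positivity
end

section
/- Let d ≥ 4 be an integer and let L, μ > 0. Set σ = Lμ/π and σ' = Lμ/(π√(d−2)), and suppose σ' ≥ 1. Let A₁ = (d−3)/4 if d ≥ 5 and A₁ = 2/3 if d = 4. Then Σ_{l=1}^{⌊σ⌋} (1 − (l/σ)²)^{(d−1)/2} ≤ ∫_0^σ (1 − (x/σ)²)^{(d−1)/2} dx − ((d−1)/4)·(⌊σ'⌋/σ)²·(1 − A₁·(⌊σ'⌋/σ)²). -/
open Set

lemma deriv_inner {σ : ℝ} (hσ : 0 < σ) (x : ℝ) :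
    HasDerivAt (fun x : ℝ => 1 - (x/σ)^2) (-(2*x/σ^2)) x := by
  have h1 : HasDerivAt (fun x : ℝ => (x/σ)^2) (↑2 * (x/σ) ^ (2-1) * (1/σ)) x :=
    ((hasDerivAt_id' x).div_const σ).pow 2
  have h2 := h1.const_sub 1
  refine h2.congr_deriv ?_
  rw [pow_one]
  field_simp

lemma hasDerivF {σ p : ℝ} (hσ : 0 < σ) (hp1 : 1 ≤ p) (x : ℝ) :
    HasDerivAt (fun x : ℝ => (1 - (x/σ)^2) ^ p)
      (-(2*p/σ^2) * (x * (1 - (x/σ)^2) ^ (p-1))) x := by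
  have := (deriv_inner hσ x).rpow_const (p := p) (Or.inr hp1)
  convert this using 1
  ring_nf

lemma contF {σ p : ℝ} (hσ : 0 < σ) (hp1 : 1 ≤ p) :
    Continuous (fun x : ℝ => (1 - (x/σ)^2) ^ p) := by
  refine continuous_iff_continuousAt.2 fun x => ((hasDerivF hσ hp1 x).differentiableAt).continuousAt

lemma concaveF {σ p c : ℝ} (hσ : 0 < σ) (hp : 3/2 ≤ p) (hc : 0 < c)
    (hcσ : (2*p-1) * c^2 ≤ σ^2) :
    ConcaveOn ℝ (Icc 0 c) (fun x : ℝ => (1 - (x/σ)^2) ^ p) := by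
  have hp1 : (1:ℝ) ≤ p := by linarith
  set f' : ℝ → ℝ := fun x => -(2*p/σ^2) * (x * (1 - (x/σ)^2) ^ (p-1)) with hf'
  set f'' : ℝ → ℝ := fun x =>
    -(2*p/σ^2) * ((1 - (x/σ)^2) ^ (p-1) + x * ((-(2*x/σ^2)) * (p-1) * (1 - (x/σ)^2) ^ (p-2)))
    with hf''
  have hbase : ∀ x ∈ interior (Icc (0:ℝ) c), 0 < 1 - (x/σ)^2 := by
    intro x hx
    rw [interior_Icc, mem_Ioo] at hx
    have hx2 : x^2 < c^2 := by nlinarith [hx.1, hx.2]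
    have hcs : c^2 < σ^2 := by nlinarith
    have : (x/σ)^2 < 1 := by
      rw [div_pow, div_lt_one (by positivity)]
      linarith
    linarith
  apply concaveOn_of_hasDerivWithinAt2_nonpos (f' := f') (f'' := f'') (convex_Icc 0 c)
  · exact (contF hσ hp1).continuousOn
  · exact fun x hx => (hasDerivF hσ hp1 x).hasDerivWithinAt
  · intro x hx
    have hb := (hbase x hx).ne'
    have hin : HasDerivAt (fun x : ℝ => x * (1 - (x/σ)^2) ^ (p-1))
        (1 * (1 - (x/σ)^2) ^ (p-1) + x * ((-(2*x/σ^2)) * (p-1) * (1 - (x/σ)^2) ^ (p-1-1))) x :=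
      (hasDerivAt_id x).mul ((deriv_inner hσ x).rpow_const (Or.inl hb))
    have h3 := hin.const_mul (-(2*p/σ^2))
    have hexp : p - 1 - 1 = p - 2 := by ring
    rw [hexp, one_mul] at h3
    exact h3.hasDerivWithinAt
  · intro x hx
    have hb := hbase x hx
    rw [interior_Icc, mem_Ioo] at hx
    have hsplit : (1 - (x/σ)^2) ^ (p-1) = (1 - (x/σ)^2) ^ (p-2) * (1 - (x/σ)^2) := by
      rw [show p-1 = (p-2)+1 by ring, Real.rpow_add hb, Real.rpow_one]
    have hA : (0:ℝ) ≤ (1 - (x/σ)^2) ^ (p-2) := Real.rpow_nonneg (le_of_lt hb) _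
    have hfact : (1 - (x/σ)^2) ^ (p-1) + x * ((-(2*x/σ^2)) * (p-1) * (1 - (x/σ)^2) ^ (p-2))
        = (1 - (x/σ)^2) ^ (p-2) * (1 - (2*p-1) * (x/σ)^2) := by
      rw [hsplit]
      field_simp
      ring
    have hnn : 0 ≤ 1 - (2*p-1) * (x/σ)^2 := by
      have hx2 : x^2 ≤ c^2 := by nlinarith [hx.1, hx.2]
      have h1 : (2*p-1) * x^2 ≤ σ^2 := by nlinarith
      rw [div_pow, sub_nonneg,
        show (2*p-1) * (x^2/σ^2) = ((2*p-1) * x^2)/σ^2 from by ring,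
        div_le_one (by positivity)]
      exact h1
    show -(2*p/σ^2) * ((1 - (x/σ)^2) ^ (p-1) + x * ((-(2*x/σ^2)) * (p-1) * (1 - (x/σ)^2) ^ (p-2))) ≤ 0
    rw [hfact]
    apply mul_nonpos_of_nonpos_of_nonneg
    · have : 0 < 2*p/σ^2 := by positivity
      linarith
    · exact mul_nonneg hA hnn

lemma trapezoid {f : ℝ → ℝ} {c a : ℝ} (hconc : ConcaveOn ℝ (Icc 0 c) f)
    (hcont : Continuous f) (ha : 0 ≤ a) (hab : a + 1 ≤ c) :
    (f a + f (a+1)) / 2 ≤ ∫ x in a..(a+1), f x := by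
  have hmem1 : a ∈ Icc (0:ℝ) c := ⟨ha, by linarith⟩
  have hmem2 : a + 1 ∈ Icc (0:ℝ) c := ⟨by linarith, hab⟩
  have hpt : ∀ x ∈ Icc a (a+1), f a * ((a+1) - x) + f (a+1) * (x - a) ≤ f x := by
    intro x hx
    have h1 : (0:ℝ) ≤ (a+1) - x := by linarith [hx.2]
    have h2 : (0:ℝ) ≤ x - a := by linarith [hx.1]
    have h3 : ((a+1) - x) + (x - a) = 1 := by ring
    have := hconc.2 hmem1 hmem2 h1 h2 h3
    have hxeq : ((a+1) - x) • a + (x - a) • (a+1) = x := by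
      simp only [smul_eq_mul]; ring
    rw [hxeq] at this
    calc f a * ((a+1) - x) + f (a+1) * (x - a)
        = ((a+1) - x) • f a + (x - a) • f (a+1) := by simp only [smul_eq_mul]; ring
      _ ≤ f x := this
  have hInt : IntervalIntegrable f MeasureTheory.volume a (a+1) := hcont.intervalIntegrable _ _
  have hIntg : IntervalIntegrable (fun x => f a * ((a+1) - x) + f (a+1) * (x - a))
      MeasureTheory.volume a (a+1) := (Continuous.intervalIntegrable (by continuity) _ _)
  have hle := intervalIntegral.integral_mono_on (by linarith : a ≤ a + 1) hIntg hInt hpt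
  have hcalc : (∫ x in a..(a+1), (f a * ((a+1) - x) + f (a+1) * (x - a)))
      = (f a + f (a+1)) / 2 := by
    rw [intervalIntegral.integral_add ((Continuous.intervalIntegrable (by continuity) _ _))
      ((Continuous.intervalIntegrable (by continuity) _ _))]
    have e1 : (∫ x in a..(a+1), f a * ((a+1) - x)) = f a * ∫ x in a..(a+1), ((a+1) - x) := by
      exact intervalIntegral.integral_const_mul _ _
    have e2 : (∫ x in a..(a+1), f (a+1) * (x - a)) = f (a+1) * ∫ x in a..(a+1), (x - a) := by
      exact intervalIntegral.integral_const_mul _ _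
    rw [e1, e2]
    have i1 : (∫ x in a..(a+1), ((a+1) - x)) = 1/2 := by
      rw [intervalIntegral.integral_sub (intervalIntegrable_const)
        (Continuous.intervalIntegrable (by continuity) _ _)]
      simp [integral_id]
      ring
    have i2 : (∫ x in a..(a+1), (x - a)) = 1/2 := by
      rw [intervalIntegral.integral_sub (Continuous.intervalIntegrable (by continuity) _ _)
        (intervalIntegrable_const)]
      simp [integral_id]
      ring
    rw [i1, i2]
    ring
  rw [hcalc] at hle
  exact hle

lemma aux_d4 {t : ℝ} (ht0 : 0 ≤ t) (ht1 : t ≤ 1) :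
    (1 - t) ^ ((3:ℝ)/2) ≤ 1 - (3/2) * t + t ^ 2 := by
  have h1 : (0:ℝ) ≤ 1 - t := by linarith
  have hs : Real.sqrt (1 - t) ≤ 1 - t/2 := by
    have := Real.sqrt_le_sqrt (show (1:ℝ) - t ≤ (1 - t/2)^2 by nlinarith)
    rwa [Real.sqrt_sq (by linarith)] at this
  have hrw : (1 - t) ^ ((3:ℝ)/2) = Real.sqrt (1 - t) ^ (3:ℕ) := by
    rw [Real.sqrt_eq_rpow, ← Real.rpow_natCast ((1-t) ^ ((1:ℝ)/2)) 3, ← Real.rpow_mul h1]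
    norm_num
  have hcube : Real.sqrt (1 - t) ^ (3:ℕ) ≤ (1 - t/2) ^ (3:ℕ) :=
    pow_le_pow_left₀ (Real.sqrt_nonneg _) hs 3
  rw [hrw]
  nlinarith [hcube, sq_nonneg t, pow_nonneg ht0 3]

lemma aux_dge5 {p : ℝ} (hp : 2 ≤ p) {t : ℝ} (ht0 : 0 ≤ t) (ht1 : t ≤ 1) :
    (1 - t) ^ p ≤ 1 - p * t + p * ((p-1)/2) * t ^ 2 := by
  have hp1 : (1:ℝ) ≤ p := by linarith
  set h : ℝ → ℝ := fun s => 1 - p * s + p * ((p-1)/2) * s ^ 2 - (1 - s) ^ p with hh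
  have hder : ∀ s : ℝ, HasDerivAt h (-p + p * (p-1) * s + p * (1 - s) ^ (p-1)) s := by
    intro s
    have h1 : HasDerivAt (fun s : ℝ => 1 - s) (-1) s := (hasDerivAt_id s).const_sub 1
    have h2 : HasDerivAt (fun s : ℝ => (1 - s) ^ p) ((-1) * p * (1 - s) ^ (p-1)) s :=
      h1.rpow_const (Or.inr hp1)
    have h3 : HasDerivAt (fun s : ℝ => 1 - p * s + p * ((p-1)/2) * s ^ 2)
        (-p + p * ((p-1)/2) * (↑2 * s ^ (2-1))) s := by
      have ha : HasDerivAt (fun s : ℝ => 1 - p * s) (-p) s := by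
        simpa using ((hasDerivAt_id s).const_mul p).const_sub 1
      exact ha.add ((hasDerivAt_pow 2 s).const_mul (p * ((p-1)/2)))
    have := h3.sub h2
    refine this.congr_deriv ?_
    push_cast
    ring
  have hmono : MonotoneOn h (Icc 0 1) := by
    apply monotoneOn_of_deriv_nonneg (convex_Icc 0 1)
    · exact fun x _ => ((hder x).continuousAt).continuousWithinAt
    · exact fun x _ => ((hder x).differentiableAt).differentiableWithinAt
    · intro x hx
      rw [interior_Icc] at hx
      rw [(hder x).deriv]
      have hb : 1 + (p - 1) * (-x) ≤ (1 + (-x)) ^ (p-1) :=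
        one_add_mul_self_le_rpow_one_add (by linarith [hx.2]) (by linarith)
      have : (1:ℝ) + (-x) = 1 - x := by ring
      rw [this] at hb
      nlinarith [hx.1, hx.2]
  have h0 : h 0 = 0 := by simp [hh]
  have := hmono (left_mem_Icc.2 zero_le_one) (mem_Icc.2 ⟨ht0, ht1⟩) ht0
  rw [h0] at this
  simp only [hh] at this
  linarith

set_option maxHeartbeats 1000000 in
/-- For integer `d ≥ 4`, `L, μ > 0`, `σ = Lμ/π`, `σ' = Lμ/(π√(d−2))` with `σ' ≥ 1`, and
`A₁ = (d−3)/4` if `d ≥ 5`, `A₁ = 2/3` if `d = 4`: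
`Σ_{l=1}^{⌊σ⌋} (1−(l/σ)²)^{(d−1)/2} ≤ ∫_0^σ (1−(x/σ)²)^{(d−1)/2} dx
  − ((d−1)/4)(⌊σ'⌋/σ)²(1 − A₁(⌊σ'⌋/σ)²)`. -/
theorem stmt14 (d : ℕ) (hd : 4 ≤ d) (L μ : ℝ) (hL : 0 < L) (hμ : 0 < μ)
    (σ σ' A₁ : ℝ)
    (hσ : σ = L * μ / Real.pi)
    (hσ' : σ' = L * μ / (Real.pi * Real.sqrt ((d : ℝ) - 2)))
    (hσ'1 : 1 ≤ σ')
    (hA₁ : A₁ = if 5 ≤ d then ((d : ℝ) - 3) / 4 else 2 / 3) :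
    ∑ l ∈ Finset.Icc 1 ⌊σ⌋₊, (1 - ((l : ℝ) / σ) ^ 2) ^ (((d : ℝ) - 1) / 2) ≤
      (∫ x in (0 : ℝ)..σ, (1 - (x / σ) ^ 2) ^ (((d : ℝ) - 1) / 2))
      - ((d : ℝ) - 1) / 4 * ((⌊σ'⌋₊ : ℝ) / σ) ^ 2 * (1 - A₁ * ((⌊σ'⌋₊ : ℝ) / σ) ^ 2) := by
  have hd4 : (4:ℝ) ≤ (d:ℝ) := by exact_mod_cast hd
  set p := ((d:ℝ) - 1)/2 with hp
  have hp32 : 3/2 ≤ p := by rw [hp]; linarith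
  have hp1 : (1:ℝ) ≤ p := by linarith
  have hp0 : (0:ℝ) ≤ p := by linarith
  have hσ'pos : 0 < σ' := lt_of_lt_of_le one_pos hσ'1
  have hd2pos : (0:ℝ) < (d:ℝ) - 2 := by linarith
  have hsqrt1 : 1 ≤ Real.sqrt ((d:ℝ) - 2) := by
    have := Real.sqrt_le_sqrt (show (1:ℝ) ≤ (d:ℝ) - 2 by linarith)
    rwa [Real.sqrt_one] at this
  have hsqpos : 0 < Real.sqrt ((d:ℝ) - 2) := lt_of_lt_of_le one_pos hsqrt1
  have hσeq : σ = σ' * Real.sqrt ((d:ℝ) - 2) := by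
    rw [hσ, hσ']
    have hπ := Real.pi_pos
    field_simp
  have hσpos : 0 < σ := by rw [hσeq]; positivity
  have hσ'σ : σ' ≤ σ := by rw [hσeq]; nlinarith
  have hsq : ((d:ℝ) - 2) * σ'^2 = σ^2 := by
    rw [hσeq, mul_pow, Real.sq_sqrt hd2pos.le]; ring
  set m := ⌊σ'⌋₊ with hm
  set n := ⌊σ⌋₊ with hn
  have hmR : (m:ℝ) ≤ σ' := Nat.floor_le hσ'pos.le
  have hm1 : 1 ≤ m := Nat.le_floor (by exact_mod_cast hσ'1)
  have hmn : m ≤ n := Nat.floor_mono hσ'σ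
  have hnR : (n:ℝ) ≤ σ := Nat.floor_le hσpos.le
  have hmpos : (0:ℝ) ≤ (m:ℝ) := Nat.cast_nonneg m
  set F : ℝ → ℝ := fun x => (1 - (x/σ)^2) ^ p with hF
  have hcont : Continuous F := contF hσpos hp1
  have hconc : ConcaveOn ℝ (Set.Icc 0 σ') F := by
    apply concaveF hσpos hp32 hσ'pos
    nlinarith [hsq]
  -- antitone integral bound
  have step_anti : ∀ a : ℝ, 0 ≤ a → a + 1 ≤ σ → F (a+1) ≤ ∫ x in a..(a+1), F x := by
    intro a ha hab
    have hpt : ∀ x ∈ Set.Icc a (a+1), F (a+1) ≤ F x := by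
      intro x hx
      have h1 : 0 ≤ x := le_trans ha hx.1
      have h2 : x ≤ a + 1 := hx.2
      have hbase1 : (0:ℝ) ≤ 1 - ((a+1)/σ)^2 := by
        have : ((a+1)/σ)^2 ≤ 1 := by
          rw [div_pow, div_le_one (by positivity)]
          nlinarith
        linarith
      have hmono : 1 - ((a+1)/σ)^2 ≤ 1 - (x/σ)^2 := by
        have : (x/σ)^2 ≤ ((a+1)/σ)^2 := by
          rw [div_pow, div_pow]
          apply div_le_div_of_nonneg_right ?_ (by positivity)
          · nlinarith
        linarith
      exact Real.rpow_le_rpow hbase1 hmono hp0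
    have hle := intervalIntegral.integral_mono_on (by linarith : a ≤ a + 1)
      (intervalIntegrable_const :
        IntervalIntegrable (fun _ => F (a+1)) MeasureTheory.volume a (a+1))
      (hcont.intervalIntegrable _ _) hpt
    calc F (a+1) = ∫ _x in a..(a+1), F (a+1) := by
          rw [intervalIntegral.integral_const]; simp
      _ ≤ ∫ x in a..(a+1), F x := hle
  -- the key summation inequality
  have tel : ∑ k ∈ Finset.range m, (F (k:ℝ)/2 - F ((k:ℝ)+1)/2) = F 0/2 - F (m:ℝ)/2 := by
    have h := Finset.sum_range_sub' (fun k : ℕ => F (k:ℝ)/2) m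
    simp only [Nat.cast_add, Nat.cast_one, Nat.cast_zero] at h
    exact h
  have hadj : ∑ k ∈ Finset.range n, ∫ x in ((k:ℕ):ℝ)..((k:ℝ)+1), F x
      = ∫ x in (0:ℝ)..(n:ℝ), F x := by
    have h := intervalIntegral.sum_integral_adjacent_intervals (μ := MeasureTheory.volume)
      (a := fun k : ℕ => (k:ℝ)) (n := n) (f := F)
      (fun k _ => hcont.intervalIntegrable _ _)
    simp only [Nat.cast_add, Nat.cast_one, Nat.cast_zero] at h
    exact h
  have key : (∑ k ∈ Finset.range n, F ((k:ℝ)+1)) + (F 0/2 - F (m:ℝ)/2)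
      ≤ ∫ x in (0:ℝ)..(n:ℝ), F x := by
    rw [← tel, ← hadj]
    have h1 : ∀ k ∈ Finset.range m, F ((k:ℝ)+1) + (F (k:ℝ)/2 - F ((k:ℝ)+1)/2)
        ≤ ∫ x in (k:ℝ)..((k:ℝ)+1), F x := by
      intro k hk
      rw [Finset.mem_range] at hk
      have hk1 : (k:ℝ) + 1 ≤ σ' := by
        have : ((k:ℕ):ℝ) + 1 ≤ (m:ℝ) := by exact_mod_cast Nat.succ_le_of_lt hk
        linarith
      have := trapezoid hconc hcont (Nat.cast_nonneg k) hk1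
      linarith
    have h2 : ∀ k ∈ Finset.Ico m n, F ((k:ℝ)+1) ≤ ∫ x in (k:ℝ)..((k:ℝ)+1), F x := by
      intro k hk
      rw [Finset.mem_Ico] at hk
      apply step_anti _ (Nat.cast_nonneg k)
      have : ((k:ℕ):ℝ) + 1 ≤ (n:ℝ) := by exact_mod_cast Nat.succ_le_of_lt hk.2
      linarith
    calc (∑ k ∈ Finset.range n, F ((k:ℝ)+1)) + ∑ k ∈ Finset.range m, (F (k:ℝ)/2 - F ((k:ℝ)+1)/2)
        = (∑ k ∈ Finset.range m, (F ((k:ℝ)+1) + (F (k:ℝ)/2 - F ((k:ℝ)+1)/2)))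
          + ∑ k ∈ Finset.Ico m n, F ((k:ℝ)+1) := by
          rw [← Finset.sum_range_add_sum_Ico (fun k : ℕ => F ((k:ℝ)+1)) hmn,
            Finset.sum_add_distrib]
          ring
      _ ≤ (∑ k ∈ Finset.range m, ∫ x in (k:ℝ)..((k:ℝ)+1), F x)
          + ∑ k ∈ Finset.Ico m n, ∫ x in (k:ℝ)..((k:ℝ)+1), F x :=
          add_le_add (Finset.sum_le_sum h1) (Finset.sum_le_sum h2)
      _ = ∑ k ∈ Finset.range n, ∫ x in (k:ℝ)..((k:ℝ)+1), F x :=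
          Finset.sum_range_add_sum_Ico (fun k : ℕ => ∫ x in (k:ℝ)..((k:ℝ)+1), F x) hmn
  have hI : (∫ x in (0:ℝ)..(n:ℝ), F x) ≤ ∫ x in (0:ℝ)..σ, F x := by
    have hnn : 0 ≤ ∫ x in ((n:ℕ):ℝ)..σ, F x := by
      apply intervalIntegral.integral_nonneg hnR
      intro u hu
      apply Real.rpow_nonneg
      have h0u : 0 ≤ u := le_trans (Nat.cast_nonneg n) hu.1
      have : (u/σ)^2 ≤ 1 := by
        rw [div_pow, div_le_one (by positivity)]
        nlinarith [hu.2]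
      linarith
    have hsplit := intervalIntegral.integral_add_adjacent_intervals
      (hcont.intervalIntegrable (μ := MeasureTheory.volume) 0 (n:ℝ))
      (hcont.intervalIntegrable (μ := MeasureTheory.volume) (n:ℝ) σ)
    linarith
  have hF0 : F 0 = 1 := by
    rw [hF]
    simp [Real.one_rpow]
  -- scalar inequality
  set t := ((m:ℝ)/σ)^2 with htdef
  have ht0 : 0 ≤ t := sq_nonneg _
  have htd : ((d:ℝ) - 2) * t ≤ 1 := by
    rw [htdef, div_pow, show ((d:ℝ)-2) * ((m:ℝ)^2/σ^2) = (((d:ℝ)-2)*(m:ℝ)^2)/σ^2 from by ring,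
      div_le_one (by positivity)]
    nlinarith [mul_nonneg (sub_nonneg.2 hmR) (by linarith : (0:ℝ) ≤ σ' + (m:ℝ))]
  have ht1 : t ≤ 1 := by nlinarith
  have hFm : F (m:ℝ) = (1 - t)^p := by rw [hF, htdef]
  have scalar : ((d:ℝ) - 1)/4 * t * (1 - A₁ * t) ≤ 1/2 - F (m:ℝ)/2 := by
    rw [hFm]
    by_cases hd5 : 5 ≤ d
    · have hd5' : (5:ℝ) ≤ (d:ℝ) := by exact_mod_cast hd5
      have hA : A₁ = ((d:ℝ) - 3)/4 := by rw [hA₁, if_pos hd5]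
      have hp2 : (2:ℝ) ≤ p := by rw [hp]; linarith
      have haux := aux_dge5 hp2 ht0 ht1
      have heq : ((d:ℝ) - 1)/4 * t * (1 - ((d:ℝ)-3)/4 * t)
          = 1/2 - (1 - p*t + p*((p-1)/2)*t^2)/2 := by rw [hp]; ring
      rw [hA, heq]
      linarith
    · have hd4' : d = 4 := by omega
      have hA : A₁ = 2/3 := by rw [hA₁, if_neg hd5]
      have hpval : p = 3/2 := by rw [hp, hd4']; norm_num
      have hdR : (d:ℝ) = 4 := by rw [hd4']; norm_num
      rw [hA, hpval, hdR]
      have haux := aux_d4 ht0 ht1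
      nlinarith [haux]
  -- convert goal sum
  have hsum : (∑ l ∈ Finset.Icc 1 n, (1 - ((l:ℝ)/σ)^2) ^ p)
      = ∑ k ∈ Finset.range n, F ((k:ℝ)+1) := by
    rw [← Finset.Ico_add_one_right_eq_Icc, Finset.sum_Ico_eq_sum_range]
    apply Finset.sum_congr rfl
    intro i _
    rw [hF]
    push_cast
    ring_nf
  calc ∑ l ∈ Finset.Icc 1 n, (1 - ((l:ℝ)/σ)^2) ^ p
      = ∑ k ∈ Finset.range n, F ((k:ℝ)+1) := hsum
    _ ≤ (∫ x in (0:ℝ)..σ, F x) - (((d:ℝ)-1)/4 * t * (1 - A₁ * t)) := by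
        rw [hF0] at key
        linarith
    _ = (∫ x in (0:ℝ)..σ, (1 - (x/σ)^2) ^ p) - ((d:ℝ)-1)/4 * t * (1 - A₁ * t) := by rw [hF]
end

section
/- Let d ≥ 11 be an integer and let L, μ > 0. Set σ = Lμ/π and σ' = Lμ/(π√(d−2)), and suppose σ' ≥ 1 (so that σ − σ' ≥ 2 and ⌊σ'⌋ + 2 ≤ ⌊σ⌋). Then Σ_{l=1}^{⌊σ⌋} (1 − (l/σ)²)^{(d−1)/2} ≤ ∫_0^σ (1 − (x/σ)²)^{(d−1)/2} dx − ((d−1)/4)·(⌊σ'⌋/σ)²·(1 − ((d−3)/4)·(⌊σ'⌋/σ)²) − (1/2)·(1 − ((⌊σ'⌋+2)/σ)²)^{(d−1)/2}. -/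
open Set MeasureTheory intervalIntegral

namespace Stmt15Aux


lemma integral_linear (a b c e : ℝ) :
    ∫ x in a..b, (c + e * x) = c * (b - a) + e * ((b ^ 2 - a ^ 2) / 2) := by
  rw [intervalIntegral.integral_add (f := fun _ => c) (g := fun x => e * x) intervalIntegrable_const
    ((continuous_const.mul continuous_id').intervalIntegrable _ _)]
  rw [intervalIntegral.integral_const]
  have : ∫ x in a..b, e * x = e * ∫ x in a..b, x := intervalIntegral.integral_const_mul e _
  rw [this, integral_id]
  simp only [smul_eq_mul]
  ring

lemma rpow_le_quadratic {p t : ℝ} (hp : 2 ≤ p) (ht0 : 0 ≤ t) (ht1 : t < 1) :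
    (1 - t) ^ p ≤ 1 - p * t + p * (p - 1) / 2 * t ^ 2 := by
  have hderiv : ∀ s ∈ Set.uIcc (0:ℝ) t, HasDerivAt (fun s : ℝ => (1 - s) ^ p)
      (-(p * (1 - s) ^ (p - 1))) s := by
    intro s hs
    rw [Set.uIcc_of_le ht0] at hs
    have hpos : (0:ℝ) < 1 - s := by linarith [hs.2]
    have h0 : HasDerivAt (fun s : ℝ => 1 - s) (-1) s := by
      simpa using (hasDerivAt_id s).const_sub 1
    have h1 : HasDerivAt (fun y : ℝ => y ^ p) (p * (1 - s) ^ (p - 1)) (1 - s) :=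
      Real.hasDerivAt_rpow_const (Or.inl hpos.ne')
    have h2 := h1.comp s h0
    have h3 : HasDerivAt (fun s : ℝ => (1 - s) ^ p) (p * (1 - s) ^ (p - 1) * (-1)) s := by
      exact h2
    convert h3 using 1
    ring
  have hcontg : Continuous (fun s : ℝ => -(p * (1 - s) ^ (p - 1))) := by
    apply Continuous.neg
    apply Continuous.mul continuous_const
    exact (Real.continuous_rpow_const (by linarith)).comp (continuous_const.sub continuous_id')
  have hftc : ∫ s in (0:ℝ)..t, -(p * (1 - s) ^ (p - 1)) = (1 - t) ^ p - (1 - 0) ^ p :=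
    intervalIntegral.integral_eq_sub_of_hasDerivAt hderiv (hcontg.intervalIntegrable _ _)
  have hmono : ∫ s in (0:ℝ)..t, -(p * (1 - s) ^ (p - 1)) ≤
      ∫ s in (0:ℝ)..t, (-p + p * (p - 1) * s) := by
    apply intervalIntegral.integral_mono_on ht0 (hcontg.intervalIntegrable _ _)
      ((continuous_const.add (continuous_const.mul continuous_id')).intervalIntegrable _ _)
    intro s hs
    have hs1 : -(1:ℝ) ≤ -s := by linarith [hs.2]
    have hbern := one_add_mul_self_le_rpow_one_add hs1 (by linarith : (1:ℝ) ≤ p - 1)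
    have : 1 + (p - 1) * (-s) ≤ (1 - s) ^ (p - 1) := by
      convert hbern using 2 <;> ring
    show -(p * (1 - s) ^ (p - 1)) ≤ -p + p * (p - 1) * s
    nlinarith [this]
  rw [integral_linear] at hmono
  rw [hftc] at hmono
  norm_num at hmono ⊢
  nlinarith [hmono]



lemma f_hasDeriv (σ p : ℝ) (hσ : 0 < σ) {x : ℝ} (hx : x ∈ Ioo (-σ) σ) :
    HasDerivAt (fun x => (1 - (x/σ)^2) ^ p) (p * (1 - (x/σ)^2) ^ (p-1) * (-(2/σ^2) * x)) x ∧
    HasDerivAt (fun x => p * (1 - (x/σ)^2) ^ (p-1) * (-(2/σ^2) * x))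
      (p * ((p-1) * (1 - (x/σ)^2) ^ (p-2) * (-(2/σ^2) * x)) * (-(2/σ^2) * x)
        + p * (1 - (x/σ)^2) ^ (p-1) * -(2/σ^2)) x := by
  have hupos : 0 < 1 - (x/σ)^2 := by
    have h1 : x/σ < 1 := (div_lt_one hσ).2 hx.2
    have h2 : -1 < x/σ := by
      rw [lt_div_iff₀ hσ]
      simpa using hx.1
    nlinarith
  have hu : HasDerivAt (fun x : ℝ => 1 - (x/σ)^2) (-(2/σ^2) * x) x := by
    have h1 : HasDerivAt (fun x : ℝ => x/σ) (1/σ) x := by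
      simpa using (hasDerivAt_id x).div_const σ
    have h3 := (h1.pow 2).const_sub 1
    have h4 : -(((2:ℕ):ℝ) * (x/σ)^(2-1) * (1/σ)) = -(2/σ^2) * x := by
      have hσ0 : σ ≠ 0 := ne_of_gt hσ
      push_cast
      rw [pow_one]
      field_simp
    rw [h4] at h3
    exact h3
  constructor
  · have h1 : HasDerivAt (fun y : ℝ => y ^ p) (p * (1 - (x/σ)^2) ^ (p-1)) (1 - (x/σ)^2) :=
      Real.hasDerivAt_rpow_const (Or.inl hupos.ne')
    have := h1.comp x hu
    exact this
  · have hA : HasDerivAt (fun x : ℝ => p * (1 - (x/σ)^2)^(p-1))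
        (p * ((p-1) * (1 - (x/σ)^2) ^ (p-2) * (-(2/σ^2) * x))) x := by
      have h1 : HasDerivAt (fun y : ℝ => y ^ (p-1)) ((p-1) * (1 - (x/σ)^2) ^ (p-1-1)) (1 - (x/σ)^2) :=
        Real.hasDerivAt_rpow_const (Or.inl hupos.ne')
      have h2 := (h1.comp x hu).const_mul p
      have h3 : p - 1 - 1 = p - 2 := by ring
      rw [h3] at h2
      simpa [Function.comp, mul_assoc] using h2
    have hB : HasDerivAt (fun x : ℝ => -(2/σ^2) * x) (-(2/σ^2)) x := by
      simpa using (hasDerivAt_id x).const_mul (-(2/σ^2))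
    exact hA.mul hB

lemma f_cont (σ p : ℝ) (hp : 0 ≤ p) : Continuous (fun x : ℝ => (1 - (x/σ)^2) ^ p) :=
  (Real.continuous_rpow_const hp).comp (continuous_const.sub ((continuous_id'.div_const σ).pow 2))

lemma f_concave (σ σ' p : ℝ) (hσ'0 : 0 < σ') (hσ'σ : σ' < σ) (hp : 5 ≤ p)
    (hsq : (2*p - 1) * σ' ^ 2 = σ ^ 2) :
    ConcaveOn ℝ (Icc (0:ℝ) σ') (fun x => (1 - (x/σ)^2) ^ p) := by
  have hσ : 0 < σ := hσ'0.trans hσ'σ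
  apply concaveOn_of_hasDerivWithinAt2_nonpos (f' := fun x => p * (1 - (x/σ)^2) ^ (p-1) * (-(2/σ^2) * x))
    (f'' := fun x => p * ((p-1) * (1 - (x/σ)^2) ^ (p-2) * (-(2/σ^2) * x)) * (-(2/σ^2) * x)
        + p * (1 - (x/σ)^2) ^ (p-1) * -(2/σ^2))
    (convex_Icc _ _) ((f_cont σ p (by linarith)).continuousOn)
  · intro x hxi
    rw [interior_Icc] at hxi
    exact ((f_hasDeriv σ p hσ ⟨by linarith [hxi.1], by linarith [hxi.2]⟩).1).hasDerivWithinAt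
  · intro x hxi
    rw [interior_Icc] at hxi
    exact ((f_hasDeriv σ p hσ ⟨by linarith [hxi.1], by linarith [hxi.2]⟩).2).hasDerivWithinAt
  · intro x hxi
    rw [interior_Icc] at hxi
    have hx0 : 0 < x := hxi.1
    have hxσ : x < σ := lt_trans hxi.2 hσ'σ
    have hupos : 0 < 1 - (x/σ)^2 := by
      have h1 : x/σ < 1 := (div_lt_one hσ).2 hxσ
      have h2 : 0 < x/σ := div_pos hx0 hσ
      nlinarith
    have hue : (1 - (x/σ)^2) ^ (p-1) = (1 - (x/σ)^2) ^ (p-2) * (1 - (x/σ)^2) := by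
      have h3 : p - 1 = (p - 2) + 1 := by ring
      rw [h3, Real.rpow_add_one hupos.ne']
    have hkey : (2*p - 1) * x^2 ≤ σ^2 := by
      have hx2 : x^2 ≤ σ'^2 := by nlinarith [hxi.2, hx0]
      nlinarith [mul_le_mul_of_nonneg_left hx2 (by linarith : (0:ℝ) ≤ 2*p-1)]
    have hbr : (p-1) * (2/σ^2) * x^2 - (1 - (x/σ)^2) ≤ 0 := by
      have heq : (p-1) * (2/σ^2) * x^2 - (1 - (x/σ)^2) = ((2*p-1)*x^2 - σ^2)/σ^2 := by
        field_simp
        ring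
      rw [heq]
      apply div_nonpos_of_nonpos_of_nonneg (by linarith) (sq_nonneg σ)
    have hfac : 0 ≤ p * (1 - (x/σ)^2) ^ (p-2) * (2/σ^2) := by
      have := Real.rpow_nonneg hupos.le (p-2)
      positivity
    calc p * ((p-1) * (1 - (x/σ)^2) ^ (p-2) * (-(2/σ^2) * x)) * (-(2/σ^2) * x)
        + p * (1 - (x/σ)^2) ^ (p-1) * -(2/σ^2)
        = (p * (1 - (x/σ)^2) ^ (p-2) * (2/σ^2)) * ((p-1) * (2/σ^2) * x^2 - (1 - (x/σ)^2)) := by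
          rw [hue]; ring
      _ ≤ 0 := mul_nonpos_of_nonneg_of_nonpos hfac hbr

lemma f_convex (σ σ' p : ℝ) (hσ'0 : 0 < σ') (hσ'σ : σ' < σ) (hp : 5 ≤ p)
    (hsq : (2*p - 1) * σ' ^ 2 = σ ^ 2) :
    ConvexOn ℝ (Icc σ' σ) (fun x => (1 - (x/σ)^2) ^ p) := by
  have hσ : 0 < σ := hσ'0.trans hσ'σ
  apply convexOn_of_hasDerivWithinAt2_nonneg (f' := fun x => p * (1 - (x/σ)^2) ^ (p-1) * (-(2/σ^2) * x))
    (f'' := fun x => p * ((p-1) * (1 - (x/σ)^2) ^ (p-2) * (-(2/σ^2) * x)) * (-(2/σ^2) * x)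
        + p * (1 - (x/σ)^2) ^ (p-1) * -(2/σ^2))
    (convex_Icc _ _) ((f_cont σ p (by linarith)).continuousOn)
  · intro x hxi
    rw [interior_Icc] at hxi
    exact ((f_hasDeriv σ p hσ ⟨by linarith [hxi.1], hxi.2⟩).1).hasDerivWithinAt
  · intro x hxi
    rw [interior_Icc] at hxi
    exact ((f_hasDeriv σ p hσ ⟨by linarith [hxi.1], hxi.2⟩).2).hasDerivWithinAt
  · intro x hxi
    rw [interior_Icc] at hxi
    have hx0 : 0 < x := hσ'0.trans hxi.1
    have hxσ : x < σ := hxi.2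
    have hupos : 0 < 1 - (x/σ)^2 := by
      have h1 : x/σ < 1 := (div_lt_one hσ).2 hxσ
      have h2 : 0 < x/σ := div_pos hx0 hσ
      nlinarith
    have hue : (1 - (x/σ)^2) ^ (p-1) = (1 - (x/σ)^2) ^ (p-2) * (1 - (x/σ)^2) := by
      have h3 : p - 1 = (p - 2) + 1 := by ring
      rw [h3, Real.rpow_add_one hupos.ne']
    have hkey : σ^2 ≤ (2*p - 1) * x^2 := by
      have hx2 : σ'^2 ≤ x^2 := by nlinarith [hxi.1, hσ'0]
      nlinarith [mul_le_mul_of_nonneg_left hx2 (by linarith : (0:ℝ) ≤ 2*p-1)]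
    have hbr : 0 ≤ (p-1) * (2/σ^2) * x^2 - (1 - (x/σ)^2) := by
      have heq : (p-1) * (2/σ^2) * x^2 - (1 - (x/σ)^2) = ((2*p-1)*x^2 - σ^2)/σ^2 := by
        field_simp
        ring
      rw [heq]
      apply div_nonneg (by linarith) (sq_nonneg σ)
    have hfac : 0 ≤ p * (1 - (x/σ)^2) ^ (p-2) * (2/σ^2) := by
      have := Real.rpow_nonneg hupos.le (p-2)
      positivity
    calc (0:ℝ) ≤ (p * (1 - (x/σ)^2) ^ (p-2) * (2/σ^2)) * ((p-1) * (2/σ^2) * x^2 - (1 - (x/σ)^2)) :=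
          mul_nonneg hfac hbr
      _ = p * ((p-1) * (1 - (x/σ)^2) ^ (p-2) * (-(2/σ^2) * x)) * (-(2/σ^2) * x)
        + p * (1 - (x/σ)^2) ^ (p-1) * -(2/σ^2) := by rw [hue]; ring



lemma concave_chord {D : Set ℝ} {f : ℝ → ℝ} (hf : ConcaveOn ℝ D f) {a b x : ℝ}
    (ha : a ∈ D) (hb : b ∈ D) (hax : a ≤ x) (hxb : x ≤ b) (hab : a < b) :
    (b - x) * f a + (x - a) * f b ≤ (b - a) * f x := by
  have hba : (0:ℝ) < b - a := by linarith
  have hcomb : ((b-x)/(b-a)) • a + ((x-a)/(b-a)) • b = x := by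
    rw [smul_eq_mul, smul_eq_mul, div_mul_eq_mul_div, div_mul_eq_mul_div, ← add_div,
      div_eq_iff hba.ne']
    ring
  have h := hf.2 ha hb (show (0:ℝ) ≤ (b-x)/(b-a) from div_nonneg (by linarith) hba.le)
    (show (0:ℝ) ≤ (x-a)/(b-a) from div_nonneg (by linarith) hba.le)
    (show (b-x)/(b-a) + (x-a)/(b-a) = 1 by rw [← add_div, div_eq_one_iff_eq hba.ne']; ring)
  rw [hcomb] at h
  rw [smul_eq_mul, smul_eq_mul] at h
  have h2 := mul_le_mul_of_nonneg_left h hba.le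
  calc (b - x) * f a + (x - a) * f b
      = (b - a) * ((b-x)/(b-a) * f a + (x-a)/(b-a) * f b) := by field_simp
    _ ≤ (b - a) * f x := h2

lemma convex_secant {D : Set ℝ} {f : ℝ → ℝ} (hf : ConvexOn ℝ D f) {a b x : ℝ}
    (hx : x ∈ D) (hb : b ∈ D) (hxa : x ≤ a) (hab : a < b) :
    (b - x) * f a - (a - x) * f b ≤ (b - a) * f x := by
  have hbx : (0:ℝ) < b - x := by linarith
  have hcomb : ((b-a)/(b-x)) • x + ((a-x)/(b-x)) • b = a := by
    rw [smul_eq_mul, smul_eq_mul, div_mul_eq_mul_div, div_mul_eq_mul_div, ← add_div,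
      div_eq_iff hbx.ne']
    ring
  have h := hf.2 hx hb (show (0:ℝ) ≤ (b-a)/(b-x) from div_nonneg (by linarith) hbx.le)
    (show (0:ℝ) ≤ (a-x)/(b-x) from div_nonneg (by linarith) hbx.le)
    (show (b-a)/(b-x) + (a-x)/(b-x) = 1 by rw [← add_div, div_eq_one_iff_eq hbx.ne']; ring)
  rw [hcomb] at h
  rw [smul_eq_mul, smul_eq_mul] at h
  have h2 := mul_le_mul_of_nonneg_left h hbx.le
  have h3 : (b - x) * f a ≤ (b - a) * f x + (a - x) * f b := by
    calc (b - x) * f a ≤ (b - x) * ((b-a)/(b-x) * f x + (a-x)/(b-x) * f b) := h2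
      _ = (b - a) * f x + (a - x) * f b := by field_simp
  linarith



set_option maxHeartbeats 2000000 in
lemma key (f : ℝ → ℝ) (σ : ℝ) (m n : ℕ)
    (hm : 1 ≤ m) (hmn : m + 2 ≤ n) (hnσ : (n : ℝ) ≤ σ) (hσn : σ < (n : ℝ) + 1)
    (hcont : Continuous f)
    (hnonneg : ∀ x ∈ Icc (0:ℝ) σ, 0 ≤ f x)
    (hanti : ∀ x y : ℝ, 0 ≤ x → x ≤ y → y ≤ σ → f y ≤ f x)
    (hfσ : f σ = 0)
    (hconc : ConcaveOn ℝ (Icc (0:ℝ) (m:ℝ)) f)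
    (hconv : ConvexOn ℝ (Icc ((m:ℝ)+1) σ) f) :
    ∑ l ∈ Finset.Icc 1 n, f (l:ℝ) ≤ (∫ x in (0:ℝ)..σ, f x)
      - (f 0 - f (m:ℝ)) / 2 - 1 / 2 * f ((m:ℝ) + 2) := by
  have hInt : ∀ a b : ℝ, IntervalIntegrable f volume a b := fun a b =>
    hcont.intervalIntegrable a b
  obtain ⟨k, hk⟩ : ∃ k, n = m + 2 + k := ⟨n - (m+2), by omega⟩
  have hmR2 : (m:ℝ) + 2 ≤ (n:ℝ) := by exact_mod_cast hmn
  have hm1 : (1:ℝ) ≤ (m:ℝ) := by exact_mod_cast hm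
  have hnR : (m:ℝ) + 2 + (k:ℝ) = (n:ℝ) := by
    rw [hk]; push_cast; ring
  -- sum decomposition
  have hsum : ∑ l ∈ Finset.Icc 1 n, f (l:ℝ)
      = (∑ i ∈ Finset.range m, f ((i:ℝ)+1)) + f ((m:ℝ)+1)
        + (∑ i ∈ Finset.range k, f ((m:ℝ)+2+(i:ℝ))) + f (n:ℝ) := by
    rw [← Finset.Ico_add_one_right_eq_Icc, Finset.sum_Ico_eq_sum_range]
    norm_num
    have hns : n = (m + 1 + k) + 1 := by omega
    rw [hns, Finset.sum_range_succ, Finset.sum_range_add, Finset.sum_range_succ]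
    congr 1
    · congr 1
      · congr 1
        · exact Finset.sum_congr rfl (fun i _ => congrArg f (by push_cast; ring))
        · exact congrArg f (by push_cast; ring)
      · exact Finset.sum_congr rfl (fun i _ => congrArg f (by push_cast; ring))
    · exact congrArg f (by push_cast; linarith [hnR])
  -- Step A
  have stepA : ∀ i ∈ Finset.range m,
      f ((i:ℝ)+1) ≤ (∫ x in (i:ℝ)..((i:ℝ)+1), f x) - (f (i:ℝ) - f ((i:ℝ)+1))/2 := by
    intro i hi
    have him : i < m := Finset.mem_range.mp hi
    have himR : (i:ℝ) + 1 ≤ (m:ℝ) := by exact_mod_cast Nat.succ_le_of_lt him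
    have hi0 : (0:ℝ) ≤ (i:ℝ) := Nat.cast_nonneg i
    have hchord : ∀ x ∈ Icc (i:ℝ) ((i:ℝ)+1),
        (((i:ℝ) + 1) * f (i:ℝ) - (i:ℝ) * f ((i:ℝ)+1)) + (f ((i:ℝ)+1) - f (i:ℝ)) * x ≤ f x := by
      intro x hx
      have h := concave_chord hconc (a := (i:ℝ)) (b := (i:ℝ)+1) (x := x)
        ⟨hi0, by linarith⟩ ⟨by linarith, himR⟩ hx.1 hx.2 (by linarith)
      nlinarith [h]
    have hle := intervalIntegral.integral_mono_on (by linarith : (i:ℝ) ≤ (i:ℝ)+1)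
      ((continuous_const.add (continuous_const.mul continuous_id')).intervalIntegrable _ _)
      (hInt _ _) hchord
    simp only [Pi.add_apply, Pi.mul_apply] at hle
    rw [integral_linear] at hle
    nlinarith [hle]
  have sumA : ∑ i ∈ Finset.range m, f ((i:ℝ)+1)
      ≤ (∫ x in (0:ℝ)..(m:ℝ), f x) - (f 0 - f (m:ℝ))/2 := by
    calc ∑ i ∈ Finset.range m, f ((i:ℝ)+1)
        ≤ ∑ i ∈ Finset.range m, ((∫ x in (i:ℝ)..((i:ℝ)+1), f x) - (f (i:ℝ) - f ((i:ℝ)+1))/2) :=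
          Finset.sum_le_sum stepA
      _ = (∑ i ∈ Finset.range m, ∫ x in (i:ℝ)..((i:ℝ)+1), f x)
          - (∑ i ∈ Finset.range m, (f (i:ℝ) - f ((i:ℝ)+1)))/2 := by
          rw [Finset.sum_sub_distrib, Finset.sum_div]
      _ = (∫ x in (0:ℝ)..(m:ℝ), f x) - (f 0 - f (m:ℝ))/2 := by
          congr 1
          · have hadj := intervalIntegral.sum_integral_adjacent_intervals
              (a := fun i : ℕ => (i:ℝ)) (n := m) (μ := volume) (fun i _ => hInt _ _)
            simp only [Nat.cast_zero] at hadj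
            rw [← hadj]
            exact Finset.sum_congr rfl (fun i _ => by
              congr 1
              push_cast
              ring)
          · rw [Finset.sum_congr rfl (fun (i : ℕ) _ =>
                (show f (i:ℝ) - f ((i:ℝ)+1) = f (i:ℝ) - f (((i+1:ℕ)):ℝ) by
                  rw [congrArg f (by push_cast; ring : (((i+1:ℕ)):ℝ) = (i:ℝ)+1)]))]
            rw [Finset.sum_range_sub' (fun i : ℕ => f (i:ℝ)) m]
            norm_num
  -- Step B
  have stepB : f ((m:ℝ)+1) ≤ ∫ x in (m:ℝ)..((m:ℝ)+1), f x := by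
    have hp : ∀ x ∈ Icc (m:ℝ) ((m:ℝ)+1), f ((m:ℝ)+1) + 0 * x ≤ f x := by
      intro x hx
      have := hanti x ((m:ℝ)+1) (by linarith [hx.1]) hx.2 (by linarith)
      linarith
    have hle := intervalIntegral.integral_mono_on (by linarith : (m:ℝ) ≤ (m:ℝ)+1)
      ((continuous_const.add (continuous_const.mul continuous_id')).intervalIntegrable _ _)
      (hInt _ _) hp
    simp only [Pi.add_apply, Pi.mul_apply] at hle
    rw [integral_linear] at hle
    nlinarith [hle]
  -- Step C
  have stepC : ∀ i ∈ Finset.range k,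
      f ((m:ℝ)+2+(i:ℝ)) ≤ (∫ x in ((m:ℝ)+1+(i:ℝ))..((m:ℝ)+2+(i:ℝ)), f x)
        - (f ((m:ℝ)+2+(i:ℝ)) - f ((m:ℝ)+3+(i:ℝ)))/2 := by
    intro i hi
    have hik : i < k := Finset.mem_range.mp hi
    have hikR : (i:ℝ) + 1 ≤ (k:ℝ) := by exact_mod_cast Nat.succ_le_of_lt hik
    have hi0 : (0:ℝ) ≤ (i:ℝ) := Nat.cast_nonneg i
    have h1 : (m:ℝ)+3+(i:ℝ) ≤ σ := by linarith
    have hchord : ∀ x ∈ Icc ((m:ℝ)+1+(i:ℝ)) ((m:ℝ)+2+(i:ℝ)),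
        ((((m:ℝ)+3+(i:ℝ)) * f ((m:ℝ)+2+(i:ℝ)) - ((m:ℝ)+2+(i:ℝ)) * f ((m:ℝ)+3+(i:ℝ)))
          + (f ((m:ℝ)+3+(i:ℝ)) - f ((m:ℝ)+2+(i:ℝ))) * x) ≤ f x := by
      intro x hx
      have h := convex_secant hconv (a := (m:ℝ)+2+(i:ℝ)) (b := (m:ℝ)+3+(i:ℝ)) (x := x)
        ⟨by linarith [hx.1], by linarith [hx.2]⟩ ⟨by linarith, h1⟩ hx.2 (by linarith)
      nlinarith [h]
    have hle := intervalIntegral.integral_mono_on (by linarith : (m:ℝ)+1+(i:ℝ) ≤ (m:ℝ)+2+(i:ℝ))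
      ((continuous_const.add (continuous_const.mul continuous_id')).intervalIntegrable _ _)
      (hInt _ _) hchord
    simp only [Pi.add_apply, Pi.mul_apply] at hle
    rw [integral_linear] at hle
    nlinarith [hle]
  have sumC : ∑ i ∈ Finset.range k, f ((m:ℝ)+2+(i:ℝ))
      ≤ (∫ x in ((m:ℝ)+1)..((m:ℝ)+1+(k:ℝ)), f x) - (f ((m:ℝ)+2) - f (n:ℝ))/2 := by
    calc ∑ i ∈ Finset.range k, f ((m:ℝ)+2+(i:ℝ))
        ≤ ∑ i ∈ Finset.range k, ((∫ x in ((m:ℝ)+1+(i:ℝ))..((m:ℝ)+2+(i:ℝ)), f x)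
            - (f ((m:ℝ)+2+(i:ℝ)) - f ((m:ℝ)+3+(i:ℝ)))/2) := Finset.sum_le_sum stepC
      _ = (∑ i ∈ Finset.range k, ∫ x in ((m:ℝ)+1+(i:ℝ))..((m:ℝ)+2+(i:ℝ)), f x)
          - (∑ i ∈ Finset.range k, (f ((m:ℝ)+2+(i:ℝ)) - f ((m:ℝ)+3+(i:ℝ))))/2 := by
          rw [Finset.sum_sub_distrib, Finset.sum_div]
      _ = (∫ x in ((m:ℝ)+1)..((m:ℝ)+1+(k:ℝ)), f x) - (f ((m:ℝ)+2) - f (n:ℝ))/2 := by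
          congr 1
          · have hadj := intervalIntegral.sum_integral_adjacent_intervals
              (a := fun i : ℕ => (m:ℝ)+1+(i:ℝ)) (n := k) (μ := volume) (fun i _ => hInt _ _)
            simp only [Nat.cast_zero, add_zero] at hadj
            rw [← hadj]
            exact Finset.sum_congr rfl (fun i _ => by
              congr 1
              push_cast
              ring)
          · rw [Finset.sum_congr rfl (fun (i : ℕ) _ =>
                (show f ((m:ℝ)+2+(i:ℝ)) - f ((m:ℝ)+3+(i:ℝ))
                    = f ((m:ℝ)+2+(i:ℝ)) - f ((m:ℝ)+2+(((i+1:ℕ)):ℝ)) by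
                  rw [congrArg f (by push_cast; ring :
                    (m:ℝ)+2+(((i+1:ℕ)):ℝ) = (m:ℝ)+3+(i:ℝ))]))]
            rw [Finset.sum_range_sub' (fun i : ℕ => f ((m:ℝ)+2+(i:ℝ))) k]
            rw [congrArg f (by push_cast; ring : (m:ℝ)+2+((0:ℕ):ℝ) = (m:ℝ)+2)]
            rw [congrArg f (by linarith : (m:ℝ)+2+((k:ℕ):ℝ) = (n:ℝ))]
  -- Step D
  have hfn0 : 0 ≤ f (n:ℝ) := hnonneg _ ⟨by linarith, hnσ⟩
  have stepD : (3/2) * f (n:ℝ) ≤ ∫ x in ((n:ℝ)-1)..σ, f x := by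
    rcases eq_or_lt_of_le hnσ with heq | hlt
    · have hz : f (n:ℝ) = 0 := by rw [heq]; exact hfσ
      rw [hz, mul_zero]
      apply intervalIntegral.integral_nonneg (by linarith)
      intro x hx
      exact hnonneg x ⟨by linarith [hx.1], hx.2⟩
    · have hd : (0:ℝ) < σ - (n:ℝ) := by linarith
      have hsec : ∀ x ∈ Icc ((n:ℝ)-1) (n:ℝ),
          (σ * f (n:ℝ))/(σ - (n:ℝ)) + (-(f (n:ℝ))/(σ - (n:ℝ))) * x ≤ f x := by
        intro x hx
        have h := convex_secant hconv (a := (n:ℝ)) (b := σ) (x := x)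
          ⟨by linarith [hx.1], by linarith [hx.2]⟩ ⟨by linarith, le_refl σ⟩ hx.2 hlt
        rw [hfσ, mul_zero, sub_zero] at h
        have heq2 : (σ * f (n:ℝ))/(σ - (n:ℝ)) + (-(f (n:ℝ))/(σ - (n:ℝ))) * x
            = ((σ - x) * f (n:ℝ))/(σ - (n:ℝ)) := by ring
        rw [heq2, div_le_iff₀ hd]
        nlinarith [h]
      have hle := intervalIntegral.integral_mono_on (by linarith : (n:ℝ)-1 ≤ (n:ℝ))
        ((continuous_const.add (continuous_const.mul continuous_id')).intervalIntegrable _ _)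
        (hInt _ _) hsec
      simp only [Pi.add_apply, Pi.mul_apply] at hle
      rw [integral_linear] at hle
      have hL : (σ * f (n:ℝ))/(σ - (n:ℝ)) * ((n:ℝ) - ((n:ℝ)-1))
            + (-(f (n:ℝ))/(σ - (n:ℝ))) * ((((n:ℝ))^2 - ((n:ℝ)-1)^2)/2)
          = (f (n:ℝ) * (σ - (n:ℝ) + 1/2))/(σ - (n:ℝ)) := by
        field_simp
        ring
      rw [hL] at hle
      have h3 : (3/2) * f (n:ℝ) ≤ (f (n:ℝ) * (σ - (n:ℝ) + 1/2))/(σ - (n:ℝ)) := by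
        rw [le_div_iff₀ hd]
        nlinarith [mul_nonneg hfn0 (show (0:ℝ) ≤ 1 - (σ - (n:ℝ)) by linarith)]
      have h4 : (0:ℝ) ≤ ∫ x in (n:ℝ)..σ, f x := by
        apply intervalIntegral.integral_nonneg hnσ
        intro x hx
        exact hnonneg x ⟨by linarith [hx.1], hx.2⟩
      have h5 : (∫ x in ((n:ℝ)-1)..(n:ℝ), f x) + ∫ x in (n:ℝ)..σ, f x
          = ∫ x in ((n:ℝ)-1)..σ, f x :=
        intervalIntegral.integral_add_adjacent_intervals (hInt _ _) (hInt _ _)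
      linarith
  -- integral decomposition
  have hkn : (m:ℝ)+1+(k:ℝ) = (n:ℝ)-1 := by linarith
  have e1 : (∫ x in (0:ℝ)..(m:ℝ), f x) + (∫ x in (m:ℝ)..((m:ℝ)+1), f x)
      = ∫ x in (0:ℝ)..((m:ℝ)+1), f x :=
    intervalIntegral.integral_add_adjacent_intervals (hInt _ _) (hInt _ _)
  have e2 : (∫ x in (0:ℝ)..((m:ℝ)+1), f x) + (∫ x in ((m:ℝ)+1)..((m:ℝ)+1+(k:ℝ)), f x)
      = ∫ x in (0:ℝ)..((m:ℝ)+1+(k:ℝ)), f x :=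
    intervalIntegral.integral_add_adjacent_intervals (hInt _ _) (hInt _ _)
  have e3 : (∫ x in (0:ℝ)..((n:ℝ)-1), f x) + (∫ x in ((n:ℝ)-1)..σ, f x)
      = ∫ x in (0:ℝ)..σ, f x :=
    intervalIntegral.integral_add_adjacent_intervals (hInt _ _) (hInt _ _)
  rw [hkn] at e2 sumC
  rw [hsum]
  have hD' : f (n:ℝ) ≤ (∫ x in ((n:ℝ)-1)..σ, f x) - (1/2) * f (n:ℝ) := by linarith
  linarith [sumA, stepB, sumC, hD']

end Stmt15Aux

open Stmt15Aux Set in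
set_option maxHeartbeats 1000000 in
/-- For integer `d ≥ 11`, `L, μ > 0`, `σ = Lμ/π`, `σ' = Lμ/(π√(d−2))` with `σ' ≥ 1`:
`Σ_{l=1}^{⌊σ⌋} (1−(l/σ)²)^{(d−1)/2} ≤ ∫_0^σ (1−(x/σ)²)^{(d−1)/2} dx
  − ((d−1)/4)(⌊σ'⌋/σ)²(1 − ((d−3)/4)(⌊σ'⌋/σ)²) − (1/2)(1 − ((⌊σ'⌋+2)/σ)²)^{(d−1)/2}`. -/
theorem stmt15 (d : ℕ) (hd : 11 ≤ d) (L μ : ℝ) (hL : 0 < L) (hμ : 0 < μ)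
    (σ σ' : ℝ)
    (hσ : σ = L * μ / Real.pi)
    (hσ' : σ' = L * μ / (Real.pi * Real.sqrt ((d : ℝ) - 2)))
    (hσ'1 : 1 ≤ σ') :
    ∑ l ∈ Finset.Icc 1 ⌊σ⌋₊, (1 - ((l : ℝ) / σ) ^ 2) ^ (((d : ℝ) - 1) / 2) ≤
      (∫ x in (0 : ℝ)..σ, (1 - (x / σ) ^ 2) ^ (((d : ℝ) - 1) / 2))
      - ((d : ℝ) - 1) / 4 * ((⌊σ'⌋₊ : ℝ) / σ) ^ 2
          * (1 - ((d : ℝ) - 3) / 4 * ((⌊σ'⌋₊ : ℝ) / σ) ^ 2)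
      - (1 / 2) * (1 - (((⌊σ'⌋₊ : ℝ) + 2) / σ) ^ 2) ^ (((d : ℝ) - 1) / 2) := by
  have hπ : 0 < Real.pi := Real.pi_pos
  have hdR : (11:ℝ) ≤ (d:ℝ) := by exact_mod_cast hd
  have hd2 : (9:ℝ) ≤ (d:ℝ) - 2 := by linarith
  have hsqd : (3:ℝ) ≤ Real.sqrt ((d:ℝ) - 2) := by
    have h9 : Real.sqrt 9 ≤ Real.sqrt ((d:ℝ)-2) := Real.sqrt_le_sqrt hd2
    have h3 : Real.sqrt 9 = 3 := by
      rw [show (9:ℝ) = 3^2 by norm_num, Real.sqrt_sq (by norm_num : (0:ℝ) ≤ 3)]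
    linarith
  have hσ'pos : 0 < σ' := by linarith
  have hσeq : σ = σ' * Real.sqrt ((d:ℝ)-2) := by
    rw [hσ, hσ']
    field_simp
  have hσ'σ2 : σ' + 2 ≤ σ := by nlinarith
  have hσ'ltσ : σ' < σ := by linarith
  have hσpos : 0 < σ := by linarith
  set p : ℝ := ((d:ℝ)-1)/2 with hpdef
  have hp5 : 5 ≤ p := by rw [hpdef]; linarith
  have hsq : (2*p - 1) * σ' ^ 2 = σ ^ 2 := by
    rw [hσeq, mul_pow, Real.sq_sqrt (by linarith : (0:ℝ) ≤ (d:ℝ)-2), hpdef]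
    ring
  set m := ⌊σ'⌋₊ with hmdef
  set n := ⌊σ⌋₊ with hndef
  have hmσ' : (m:ℝ) ≤ σ' := Nat.floor_le hσ'pos.le
  have hm1 : 1 ≤ m := Nat.le_floor (by exact_mod_cast hσ'1)
  have hσ'm : σ' < (m:ℝ) + 1 := Nat.lt_floor_add_one σ'
  have hmn : m + 2 ≤ n := Nat.le_floor (by push_cast; linarith)
  have hnσ : (n:ℝ) ≤ σ := Nat.floor_le hσpos.le
  have hσn : σ < (n:ℝ) + 1 := Nat.lt_floor_add_one σ
  set f : ℝ → ℝ := fun x => (1 - (x/σ)^2) ^ p with hfdef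
  have hcont : Continuous f := f_cont σ p (by linarith)
  have hnonneg : ∀ x ∈ Icc (0:ℝ) σ, 0 ≤ f x := by
    intro x hx
    apply Real.rpow_nonneg
    have h1 : x/σ ≤ 1 := (div_le_one hσpos).2 hx.2
    have h2 : 0 ≤ x/σ := div_nonneg hx.1 hσpos.le
    nlinarith
  have hanti : ∀ x y : ℝ, 0 ≤ x → x ≤ y → y ≤ σ → f y ≤ f x := by
    intro x y hx hxy hyσ
    apply Real.rpow_le_rpow
    · have h1 : y/σ ≤ 1 := (div_le_one hσpos).2 hyσ
      have h2 : 0 ≤ y/σ := div_nonneg (by linarith) hσpos.le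
      nlinarith
    · have h1 : x/σ ≤ y/σ := by gcongr
      have h2 : 0 ≤ x/σ := div_nonneg hx hσpos.le
      nlinarith
    · linarith
  have hfσ : f σ = 0 := by
    simp only [hfdef]
    rw [div_self hσpos.ne']
    norm_num
    exact Real.zero_rpow (by linarith : (0:ℝ) < p).ne'
  have hconc : ConcaveOn ℝ (Icc (0:ℝ) (m:ℝ)) f :=
    (f_concave σ σ' p hσ'pos hσ'ltσ hp5 hsq).subset
      (Icc_subset_Icc le_rfl hmσ') (convex_Icc _ _)
  have hconv : ConvexOn ℝ (Icc ((m:ℝ)+1) σ) f :=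
    (f_convex σ σ' p hσ'pos hσ'ltσ hp5 hsq).subset
      (Icc_subset_Icc (by linarith) le_rfl) (convex_Icc _ _)
  have K := key f σ m n hm1 hmn hnσ hσn hcont hnonneg hanti hfσ hconc hconv
  simp only [hfdef] at K
  have h0 : ((1:ℝ) - ((0:ℝ)/σ)^2)^p = 1 := by
    norm_num
  rw [h0] at K
  set t : ℝ := ((m:ℝ)/σ)^2 with htdef
  have ht0 : 0 ≤ t := sq_nonneg _
  have ht1 : t < 1 := by
    have h1 : (m:ℝ)/σ < 1 := (div_lt_one hσpos).2 (by linarith)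
    have h2 : 0 ≤ (m:ℝ)/σ := div_nonneg (Nat.cast_nonneg m) hσpos.le
    rw [htdef]
    nlinarith
  have hB := rpow_le_quadratic (by linarith : 2 ≤ p) ht0 ht1
  have hΔ : ((d:ℝ) - 1)/4 * t * (1 - ((d:ℝ)-3)/4 * t) ≤ (1 - (1 - t)^p)/2 := by
    have heq : ((d:ℝ) - 1)/4 * t * (1 - ((d:ℝ)-3)/4 * t)
        = (p * t - p*(p-1)/2 * t^2)/2 := by
      rw [hpdef]
      ring
    rw [heq]
    linarith
  linarith [K, hΔ]
end

section
/- Let L > 0 and μ ≥ 0. Then Σ_{l=0}^{⌊Lμ/π⌋} (μ² − (πl/L)²) ≥ (2L/(3π))·μ³ + (1/2)·μ² − (π/(6L))·μ. -/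
lemma sum_sq_range (m : ℕ) :
    ∑ l ∈ Finset.range m, (l : ℝ) ^ 2 = (m : ℝ) * (m - 1) * (2 * m - 1) / 6 := by
  induction m with
  | zero => simp
  | succ k ih =>
    rw [Finset.sum_range_succ, ih]
    push_cast
    ring

/-- For `L > 0` and `μ ≥ 0`:
`Σ_{l=0}^{⌊Lμ/π⌋} (μ² − (πl/L)²) ≥ (2L/(3π))μ³ + (1/2)μ² − (π/(6L))μ`. -/
theorem stmt16 (L μ : ℝ) (hL : 0 < L) (hμ : 0 ≤ μ) :
    ∑ l ∈ Finset.range (⌊L * μ / Real.pi⌋₊ + 1), (μ ^ 2 - (Real.pi * (l : ℝ) / L) ^ 2) ≥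
      2 * L / (3 * Real.pi) * μ ^ 3 + (1 / 2) * μ ^ 2 - Real.pi / (6 * L) * μ := by
  have hπ := Real.pi_pos
  set n := ⌊L * μ / Real.pi⌋₊ with hn
  have h1 : (n : ℝ) ≤ L * μ / Real.pi := Nat.floor_le (by positivity)
  have h2 : L * μ / Real.pi < (n : ℝ) + 1 := Nat.lt_floor_add_one _
  have h1' : Real.pi * n ≤ L * μ := by
    have := (le_div_iff₀ hπ).mp h1; linarith
  have h2' : L * μ < Real.pi * ((n : ℝ) + 1) := by
    have := (div_lt_iff₀ hπ).mp h2; linarith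
  have hsum : ∑ l ∈ Finset.range (n + 1), (μ ^ 2 - (Real.pi * (l : ℝ) / L) ^ 2)
      = ((n : ℝ) + 1) * μ ^ 2
        - (Real.pi / L) ^ 2 * ((n : ℝ) * (n + 1) * (2 * n + 1) / 6) := by
    rw [Finset.sum_sub_distrib, Finset.sum_const, Finset.card_range]
    have : ∑ l ∈ Finset.range (n + 1), (Real.pi * (l : ℝ) / L) ^ 2
        = (Real.pi / L) ^ 2 * ∑ l ∈ Finset.range (n + 1), (l : ℝ) ^ 2 := by
      rw [Finset.mul_sum]; congr 1; ext l; ring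
    rw [this, sum_sq_range]
    push_cast
    ring
  rw [hsum, ge_iff_le, ← sub_nonneg]
  have key : ((n : ℝ) + 1) * μ ^ 2
        - (Real.pi / L) ^ 2 * ((n : ℝ) * (n + 1) * (2 * n + 1) / 6)
        - (2 * L / (3 * Real.pi) * μ ^ 3 + (1 / 2) * μ ^ 2 - Real.pi / (6 * L) * μ)
      = (L * μ - Real.pi * n) * (Real.pi * ((n : ℝ) + 1) - L * μ)
          * (4 * L * μ + Real.pi * (2 * n + 1)) / (6 * Real.pi * L ^ 2) := by
    field_simp
    ring
  rw [key]
  have hc : (0:ℝ) ≤ (n : ℝ) := Nat.cast_nonneg n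
  apply div_nonneg
  · apply mul_nonneg
    apply mul_nonneg <;> nlinarith
    nlinarith
  · positivity
end
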